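/- arXiv:1903.00125 — 8 statements merged into one kernel-verified Lean document; each statement's English description precedes it below -/
import Mathlib

section
/- Let n ∈ ℕ, χ > 0, p, q ≥ 1, m > 0, λ ∈ [1/3,1], K > 0, T > 0, and B₀ ∈ (0,1) with K√B₀ < Rⁿ and B₀ ≤ K²/(16(a_λ + b_λ)²). If B ∈ C¹([0,T)) is positive and nonincreasing with B(0) ≤ B₀ and B′(t) ≥ −[a_λ^{q−1}(nm)^q χ K / (2(a_λ + b_λ)(K² + a_λ Rⁿ)^{q−1} ω_n^q Rⁿ √(1 + K^{2/n−2} m²/ω_n²))] · B(t)^{1−1/(2n)} for all t ∈ (0,T), then (𝒫 w_out)(s,t) ≤ 0 for all t ∈ (0,T) and all s ∈ (K√(B(t)), Rⁿ). -/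
open Real Set

/-- `a_λ := (1-λ)²/(2λ)`. -/
noncomputable def aL (l : ℝ) : ℝ := (1 - l) ^ 2 / (2 * l)

/-- `b_λ := (3λ-1)/(2λ)`. -/
noncomputable def bL (l : ℝ) : ℝ := (3 * l - 1) / (2 * l)

/-- `ω_n`, the `(n-1)`-dimensional measure of the unit sphere in `ℝⁿ`,
equals `n` times the volume of the unit ball. -/
noncomputable def omegaN (n : ℕ) : ℝ :=
  (n : ℝ) * (MeasureTheory.volume (Metric.ball (0 : EuclideanSpace ℝ (Fin n)) 1)).toReal

/-- The comparison profile `φ`. -/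
noncomputable def phi (l d ξ : ℝ) : ℝ :=
  if ξ < 1 then (2 * l / (d * Real.exp d)) * (Real.exp (d * ξ) - 1)
  else 1 - aL l / (ξ - bL l)

/-- The derivative `φ'`. -/
noncomputable def phiD (l d ξ : ℝ) : ℝ :=
  if ξ < 1 then 2 * l * Real.exp (d * (ξ - 1)) else aL l / (ξ - bL l) ^ 2

/-- The second derivative `φ''`. -/
noncomputable def phiDD (l d ξ : ℝ) : ℝ :=
  if ξ < 1 then 2 * d * l * Real.exp (d * (ξ - 1)) else -2 * aL l / (ξ - bL l) ^ 3

/-- `N(t)`. -/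
noncomputable def Nf (l R K : ℝ) (n : ℕ) (B : ℝ → ℝ) (t : ℝ) : ℝ :=
  K ^ 2 + aL l * R ^ n - (aL l + bL l) * (2 * K * Real.sqrt (B t) - bL l * B t)

/-- `A(t)`. -/
noncomputable def Af (m ωn l R K : ℝ) (n : ℕ) (B : ℝ → ℝ) (t : ℝ) : ℝ :=
  (m / ωn) * (K ^ 2 - 2 * bL l * K * Real.sqrt (B t) + (bL l) ^ 2 * B t) / Nf l R K n B t

/-- `D(t)`. -/
noncomputable def Df (m ωn l R K : ℝ) (n : ℕ) (B : ℝ → ℝ) (t : ℝ) : ℝ :=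
  (m / ωn) * aL l / Nf l R K n B t

/-- `E(t) := m/ω_n - Rⁿ D(t)`. -/
noncomputable def Ef (m ωn l R K : ℝ) (n : ℕ) (B : ℝ → ℝ) (t : ℝ) : ℝ :=
  m / ωn - R ^ n * Df m ωn l R K n B t

/-- `A_T := (m/ω_n)·1/(1 + a_λ Rⁿ/K²)`. -/
noncomputable def AT (m ωn l R K : ℝ) (n : ℕ) : ℝ :=
  (m / ωn) * (1 / (1 + aL l * R ^ n / K ^ 2))

/-- The parabolic operator `𝒫`. -/
noncomputable def Pop (n : ℕ) (χ p q μ : ℝ) (w : ℝ → ℝ → ℝ) (s t : ℝ) : ℝ :=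
  deriv (fun τ => w s τ) t
    - (n : ℝ) ^ (p + 1) * (s ^ (2 - 2 / (n : ℝ)) * (deriv (fun σ => w σ t) s) ^ p
        * deriv (deriv (fun σ => w σ t)) s)
      / Real.sqrt ((deriv (fun σ => w σ t) s) ^ 2
        + (n : ℝ) ^ 2 * s ^ (2 - 2 / (n : ℝ)) * (deriv (deriv (fun σ => w σ t)) s) ^ 2)
    - (n : ℝ) ^ q * χ * ((w s t - (μ / (n : ℝ)) * s) * (deriv (fun σ => w σ t) s) ^ q)
      / Real.sqrt (1 + s ^ (2 / (n : ℝ) - 2) * (w s t - (μ / (n : ℝ)) * s) ^ 2)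

/-- `J₁(s,t)`. -/
noncomputable def J1 (n : ℕ) (p m ωn l R K d : ℝ) (B : ℝ → ℝ) (s t : ℝ) : ℝ :=
  -(n : ℝ) ^ (p + 1) * ((s / B t) ^ (2 - 2 / (n : ℝ)) * phiDD l d (s / B t))
    / Real.sqrt ((B t) ^ (4 / (n : ℝ) - 2) * (phiD l d (s / B t)) ^ 2
        + (n : ℝ) ^ 2 * (B t) ^ (2 / (n : ℝ) - 2) * (s / B t) ^ (2 - 2 / (n : ℝ))
          * (phiDD l d (s / B t)) ^ 2)
    * (Af m ωn l R K n B t * phiD l d (s / B t) / B t) ^ (p - 1)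

/-- `J₂(s,t)`. -/
noncomputable def J2 (n : ℕ) (q χ m ωn l R K d μ : ℝ) (B : ℝ → ℝ) (s t : ℝ) : ℝ :=
  -(n : ℝ) ^ q * χ
      * (Af m ωn l R K n B t * phi l d (s / B t) - (μ / (n : ℝ)) * B t * (s / B t))
    / Real.sqrt (1 + (B t) ^ (2 / (n : ℝ) - 2) * (s / B t) ^ (2 / (n : ℝ) - 2)
        * (Af m ωn l R K n B t * phi l d (s / B t) - (μ / (n : ℝ)) * B t * (s / B t)) ^ 2)
    * (Af m ωn l R K n B t * phiD l d (s / B t) / B t) ^ (q - 1)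

set_option maxHeartbeats 2000000 in
/-- Outer region: under the stated smallness and differential-inequality
conditions on `B`, the outer comparison function `w_out(s,t) = D(t)s + E(t)` satisfies
`(𝒫 w_out)(s,t) ≤ 0` for `t ∈ (0,T)` and `s ∈ (K√B(t), Rⁿ)`. -/
theorem stmt7 (n : ℕ) (hn : 0 < n) (R χ p q m l K T B0 : ℝ) (hR : 0 < R) (hχ : 0 < χ)
    (hp : 1 ≤ p) (hq : 1 ≤ q) (hm : 0 < m) (hl : l ∈ Set.Icc (1/3 : ℝ) 1) (hK : 0 < K)
    (hT : 0 < T) (hB0 : B0 ∈ Set.Ioo (0 : ℝ) 1) (hB0R : K * Real.sqrt B0 < R ^ n)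
    (hB0le : B0 ≤ K ^ 2 / (16 * (aL l + bL l) ^ 2))
    (B B' : ℝ → ℝ)
    (hB : ∀ t ∈ Set.Ico (0 : ℝ) T, HasDerivAt B (B' t) t)
    (hB'c : ContinuousOn B' (Set.Ico 0 T))
    (hBpos : ∀ t ∈ Set.Ico (0 : ℝ) T, 0 < B t)
    (hBanti : AntitoneOn B (Set.Ico 0 T))
    (hBinit : B 0 ≤ B0)
    (hB' : ∀ t ∈ Set.Ioo (0 : ℝ) T,
      B' t ≥ -(aL l ^ (q - 1) * ((n : ℝ) * m) ^ q * χ * K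
          / (2 * (aL l + bL l) * (K ^ 2 + aL l * R ^ n) ^ (q - 1) * (omegaN n) ^ q * R ^ n
            * Real.sqrt (1 + K ^ (2 / (n : ℝ) - 2) * m ^ 2 / (omegaN n) ^ 2)))
        * (B t) ^ (1 - 1 / (2 * (n : ℝ)))) :
    ∀ t ∈ Set.Ioo (0 : ℝ) T, ∀ s ∈ Set.Ioo (K * Real.sqrt (B t)) (R ^ n),
      Pop n χ p q ((m * n) / (omegaN n * R ^ n))
        (fun σ τ => Df m (omegaN n) l R K n B τ * σ + Ef m (omegaN n) l R K n B τ) s t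
        ≤ 0 := by
  intro t ht s hs
  obtain ⟨hl1, hl2⟩ := hl
  have hl0 : 0 < l := lt_of_lt_of_le (by norm_num) hl1
  have hωpos : 0 < omegaN n := by
    apply mul_pos (by exact_mod_cast hn)
    apply ENNReal.toReal_pos
    · exact (Metric.measure_ball_pos _ _ one_pos).ne'
    · exact (MeasureTheory.measure_ball_lt_top).ne
  set ω := omegaN n with hωeq
  clear_value ω
  set c : ℝ := m / ω with hc_def
  have hc : 0 < c := div_pos hm hωpos
  set a : ℝ := aL l with ha_def
  set b : ℝ := bL l with hb_def
  have ha : 0 ≤ a := div_nonneg (sq_nonneg _) (by linarith)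
  have hb : 0 ≤ b := div_nonneg (by linarith) (by linarith)
  have hab : a + b = (l + 1) / 2 := by
    rw [ha_def, hb_def, aL, bL]; field_simp; ring
  have habpos : 0 < a + b := by rw [hab]; linarith
  have htT : t ∈ Set.Ico (0:ℝ) T := ⟨ht.1.le, ht.2⟩
  have hBt : 0 < B t := hBpos t htT
  have hBtle : B t ≤ B0 :=
    le_trans (hBanti ⟨le_refl 0, hT⟩ htT ht.1.le) hBinit
  have hBt1 : B t < 1 := lt_of_le_of_lt hBtle hB0.2
  have hsB : Real.sqrt (B t) ≤ K / (4 * (a + b)) := by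
    rw [show K / (4 * (a+b)) = Real.sqrt ((K / (4*(a+b)))^2) from
      (Real.sqrt_sq (by positivity)).symm]
    apply Real.sqrt_le_sqrt
    calc B t ≤ B0 := hBtle
    _ ≤ K ^ 2 / (16 * (a + b) ^ 2) := hB0le
    _ = (K / (4*(a+b)))^2 := by field_simp; ring
  have hsBpos : 0 < Real.sqrt (B t) := Real.sqrt_pos.mpr hBt
  have h2K : 2 * (a + b) * K * Real.sqrt (B t) ≤ K^2 / 2 := by
    have := mul_le_mul_of_nonneg_left hsB (show (0:ℝ) ≤ 2*(a+b)*K by positivity)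
    calc 2*(a+b)*K*Real.sqrt (B t) ≤ 2*(a+b)*K*(K/(4*(a+b))) := this
    _ = K^2/2 := by field_simp; ring
  have hbB : b * B t ≤ 2 * K * Real.sqrt (B t) := by
    have h1 : b * B t = (b * Real.sqrt (B t)) * Real.sqrt (B t) := by
      rw [mul_assoc, Real.mul_self_sqrt hBt.le]
    have h2 : b * Real.sqrt (B t) ≤ 2 * K := by
      calc b * Real.sqrt (B t) ≤ (a+b) * (K/(4*(a+b))) := by
            apply mul_le_mul (by linarith) hsB hsBpos.le habpos.le
      _ = K/4 := by field_simp
      _ ≤ 2*K := by linarith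
    calc b * B t = (b * Real.sqrt (B t)) * Real.sqrt (B t) := h1
    _ ≤ (2*K) * Real.sqrt (B t) := by apply mul_le_mul_of_nonneg_right h2 hsBpos.le
    _ = 2 * K * Real.sqrt (B t) := by ring
  set Nt : ℝ := Nf l R K n B t with hNt_def
  have hRn : (0:ℝ) < R ^ n := by positivity
  have hNub : Nt ≤ K^2 + a * R^n := by
    rw [hNt_def, Nf]
    have : 0 ≤ (a + b) * (2 * K * Real.sqrt (B t) - b * B t) :=
      mul_nonneg habpos.le (by linarith)
    linarith
  have hNlb : K^2/2 + a * R^n ≤ Nt := by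
    rw [hNt_def, Nf]
    have h3 : (a + b) * (2 * K * Real.sqrt (B t) - b * B t) ≤ K^2/2 := by
      have hbBt : 0 ≤ b * B t := mul_nonneg hb hBt.le
      calc (a + b) * (2 * K * Real.sqrt (B t) - b * B t)
          ≤ (a+b) * (2 * K * Real.sqrt (B t)) := by
            apply mul_le_mul_of_nonneg_left (by linarith) habpos.le
      _ = 2*(a+b)*K*Real.sqrt (B t) := by ring
      _ ≤ K^2/2 := h2K
    linarith
  have hNpos : 0 < Nt := by nlinarith
  -- derivatives in time
  have hBder : HasDerivAt B (B' t) t := hB t htT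
  have hsqder : HasDerivAt (fun τ => Real.sqrt (B τ)) (B' t / (2 * Real.sqrt (B t))) t := by
    have h := (Real.hasDerivAt_sqrt hBt.ne').comp t hBder
    simpa [div_eq_mul_inv, mul_comm, Function.comp_def] using h
  set N' : ℝ := -((a+b) * (2*K*(B' t / (2 * Real.sqrt (B t))) - b * B' t)) with hN'_def
  have hNder : HasDerivAt (fun τ => Nf l R K n B τ) N' t := by
    have h := ((hasDerivAt_const t (K^2 + a*R^n)).sub
      (((hsqder.const_mul (2*K)).sub (hBder.const_mul b)).const_mul (a+b)))
    simp only [Nf]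
    exact h.congr_deriv (by rw [hN'_def]; ring)
  set Dt : ℝ := Df m ω l R K n B t with hDt_def
  set Et : ℝ := Ef m ω l R K n B t with hEt_def
  set D' : ℝ := -(c * a * N' / Nt^2) with hD'_def
  have hDder : HasDerivAt (fun τ => Df m ω l R K n B τ) D' t := by
    have h := (hasDerivAt_const t (m/ω * a)).div hNder hNpos.ne'
    simp only [Df]
    exact h.congr_deriv (by rw [hD'_def, hc_def, ← hNt_def]; field_simp; ring)
  have hwt : deriv (fun τ => Df m ω l R K n B τ * s + Ef m ω l R K n B τ) t
      = D' * (s - R^n) := by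
    have h : HasDerivAt (fun τ => Df m ω l R K n B τ * s + Ef m ω l R K n B τ)
        (D' * s + (0 - R^n * D')) t := by
      simp only [Ef]
      exact (hDder.mul_const s).add ((hasDerivAt_const t (m/ω)).sub (hDder.const_mul (R^n)))
    rw [h.deriv]; ring
  have hws : deriv (fun σ => Df m ω l R K n B t * σ + Ef m ω l R K n B t) = fun _ => Dt := by
    funext σ
    have h : HasDerivAt (fun σ : ℝ => Df m ω l R K n B t * σ + Ef m ω l R K n B t) Dt σ := by
      simpa using ((hasDerivAt_id σ).const_mul Dt).add_const Et
    exact h.deriv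
  have hwss : deriv (deriv (fun σ => Df m ω l R K n B t * σ + Ef m ω l R K n B t)) s = 0 := by
    rw [hws]; exact deriv_const s Dt
  rw [Pop]
  simp only [hwt, hws, deriv_const']
  have hn0 : ((n:ℝ)) ≠ 0 := Nat.cast_ne_zero.mpr hn.ne'
  have hDf : Df m ω l R K n B t = c * a / Nt := rfl
  have hωn0 : ω ≠ 0 := hωpos.ne'
  have hWeq : Df m ω l R K n B t * s + Ef m ω l R K n B t - m * (n:ℝ) / (ω * R ^ n) / (n:ℝ) * s
      = (R^n - s) * (c/R^n - Dt) := by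
    rw [Ef, hDt_def, hDf, hc_def]
    field_simp
    ring
  rw [hWeq]
  -- middle (diffusion) term vanishes
  have hmid : (n:ℝ) ^ (p + 1) * (s ^ (2 - 2 / (n:ℝ)) * Dt ^ p * 0)
      / Real.sqrt (Dt ^ 2 + (n:ℝ) ^ 2 * s ^ (2 - 2 / (n:ℝ)) * 0 ^ 2) = 0 := by
    simp
  rw [hmid]
  -- abbreviations
  have hDt2 : Dt = c * a / Nt := hDf
  clear_value D' Et Dt N' Nt c a b
  have hspos : 0 < s := lt_trans (by positivity) hs.1
  set S : ℝ := Real.sqrt (1 + s ^ (2 / (n:ℝ) - 2) * ((R^n - s) * (c/R^n - Dt)) ^ 2) with hS_def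
  have hSpos : 0 < S := by
    apply Real.sqrt_pos.mpr
    have : 0 ≤ s ^ (2 / (n:ℝ) - 2) * ((R^n - s) * (c/R^n - Dt)) ^ 2 := by positivity
    linarith
  have hDt0 : 0 ≤ Dt := by rw [hDt2]; positivity
  have hGeq : c/R^n - Dt = c * (Nt - a * R^n) / (R^n * Nt) := by
    rw [hDt2]; field_simp
  have hGlb : c * K^2 / (2 * R^n * Nt) ≤ c/R^n - Dt := by
    rw [hGeq]
    rw [div_le_div_iff₀ (by positivity) (by positivity)]
    have h1 : K^2/2 ≤ Nt - a*R^n := by linarith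
    calc c*K^2*(R^n*Nt) = c*(K^2/2)*(2*(R^n*Nt)) := by ring
    _ ≤ c*(Nt - a*R^n)*(2*(R^n*Nt)) := by
        apply mul_le_mul_of_nonneg_right (mul_le_mul_of_nonneg_left h1 hc.le) (by positivity)
    _ = c*(Nt-a*R^n)*(2*R^n*Nt) := by ring
  have hGpos : 0 < c/R^n - Dt := lt_of_lt_of_le (by positivity) hGlb
  have hGub : c/R^n - Dt ≤ c/R^n := by linarith
  have hWnn : 0 ≤ (R^n - s) * (c/R^n - Dt) := by
    apply mul_nonneg (by linarith [hs.2]) hGpos.le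
  have hWub : (R^n - s) * (c/R^n - Dt) ≤ c := by
    calc (R^n - s) * (c/R^n - Dt) ≤ R^n * (c/R^n) := by
          apply mul_le_mul (by linarith [hspos]) hGub hGpos.le hRn.le
    _ = c := by field_simp
  -- suffices the key pointwise inequality
  suffices hkey : c * a * N' / Nt^2 ≤ (n:ℝ)^q * χ * ((c/R^n - Dt) * Dt ^ q) / S by
    have h1 : D' * (s - R^n) = (R^n - s) * (c * a * N' / Nt^2) := by
      rw [hD'_def]; ring
    have h2 : (R^n - s) * (c * a * N' / Nt^2)
        ≤ (R^n - s) * ((n:ℝ)^q * χ * ((c/R^n - Dt) * Dt ^ q) / S) := by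
      apply mul_le_mul_of_nonneg_left hkey (by linarith [hs.2])
    have h3 : (R^n - s) * ((n:ℝ)^q * χ * ((c/R^n - Dt) * Dt ^ q) / S)
        = (n:ℝ)^q * χ * ((R^n - s) * (c/R^n - Dt) * Dt ^ q) / S := by ring
    linarith [h1, h2, h3.le, h3.ge]
  -- preliminary facts
  have hbSB : b * Real.sqrt (B t) ≤ K := by
    calc b * Real.sqrt (B t) ≤ (a+b) * (K/(4*(a+b))) :=
          mul_le_mul (by linarith) hsB hsBpos.le habpos.le
    _ = K/4 := by field_simp
    _ ≤ K := by linarith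
  have hbK : b ≤ K / Real.sqrt (B t) := by
    rw [le_div_iff₀ hsBpos]; exact hbSB
  have hDtq0 : 0 ≤ Dt ^ q := Real.rpow_nonneg hDt0 q
  rcases eq_or_lt_of_le ha with ha0 | hapos
  · -- case a = 0
    have hDt00 : Dt = 0 := by rw [hDt2, ← ha0]; ring
    have hN0 : c * a * N' / Nt ^ 2 = 0 := by rw [← ha0]; ring
    rw [hN0, hDt00, Real.zero_rpow (by linarith : q ≠ 0)]
    simp
  · -- case 0 < a
    rcases le_or_gt 0 (B' t) with hBp' | hBn'
    · -- B is locally nondecreasing: LHS ≤ 0 ≤ RHS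
      have hN'le : N' ≤ 0 := by
        rw [hN'_def]
        have h9 : 0 ≤ (a+b) * (2*K*(B' t/(2*Real.sqrt (B t))) - b*B' t) := by
          apply mul_nonneg habpos.le
          have h10 : b * B' t ≤ (K/Real.sqrt (B t)) * B' t :=
            mul_le_mul_of_nonneg_right hbK hBp'
          have he : 2*K*(B' t/(2*Real.sqrt (B t))) = (K/Real.sqrt (B t)) * B' t := by
            field_simp
          linarith
        linarith
      have h1 : c * a * N' / Nt^2 ≤ 0 := by
        apply div_nonpos_of_nonpos_of_nonneg _ (by positivity)
        exact mul_nonpos_of_nonneg_of_nonpos (by positivity) hN'le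
      have hnqnn : 0 ≤ (n:ℝ)^q := Real.rpow_nonneg (Nat.cast_nonneg n) q
      have h2 : 0 ≤ (n:ℝ)^q * χ * ((c/R^n - Dt)*Dt^q)/S := by
        apply div_nonneg _ hSpos.le
        exact mul_nonneg (mul_nonneg hnqnn hχ.le) (mul_nonneg hGpos.le hDtq0)
      linarith
    · -- main case : B' t < 0
      set β := -B' t with hβ_def
      have hβpos : 0 < β := by rw [hβ_def]; linarith
      have hN'2 : N' = (a+b) * (β * (K/Real.sqrt (B t) - b)) := by
        rw [hN'_def, hβ_def]; field_simp
      set C : ℝ := K ^ (2/(n:ℝ) - 2) * m^2 / ω^2 with hC_def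
      have hCpos : 0 < C := by
        rw [hC_def]
        have := Real.rpow_pos_of_pos hK (2/(n:ℝ) - 2)
        positivity
      set sq1C := Real.sqrt (1 + C) with hsq1C_def
      have hsq1Cpos : 0 < sq1C := Real.sqrt_pos.mpr (by linarith)
      set KQ := (K^2 + a*R^n) ^ (q-1) with hKQ_def
      set NQ := Nt ^ (q-1) with hNQ_def
      set A1 := a ^ (q-1) with hA1_def
      set nq := (n:ℝ) ^ q with hnq_def
      set mq := m ^ q with hmq_def
      set ωq := ω ^ q with hωq_def
      set P := (B t) ^ ((1:ℝ)/2 - 1/(2*(n:ℝ))) with hP_def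
      set Bp := (B t) ^ ((1/(n:ℝ) - 1)/2) with hBp_def
      have hq1 : (0:ℝ) ≤ q - 1 := by linarith
      have hKQpos : 0 < KQ := Real.rpow_pos_of_pos (by positivity) _
      have hNQpos : 0 < NQ := Real.rpow_pos_of_pos hNpos _
      have hA1pos : 0 < A1 := Real.rpow_pos_of_pos hapos _
      have hnqpos : 0 < nq := Real.rpow_pos_of_pos (by exact_mod_cast hn) _
      have hmqpos : 0 < mq := Real.rpow_pos_of_pos hm _
      have hωqpos : 0 < ωq := Real.rpow_pos_of_pos hωpos _
      have hPpos : 0 < P := Real.rpow_pos_of_pos hBt _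
      have hBppos : 0 < Bp := Real.rpow_pos_of_pos hBt _
      have hNQKQ : NQ ≤ KQ := Real.rpow_le_rpow hNpos.le hNub hq1
      -- rpow identities
      have hnm : ((n:ℝ)*m)^q = nq * mq := Real.mul_rpow (Nat.cast_nonneg n) hm.le
      have hcq : c^q = mq/ωq := by rw [hc_def, Real.div_rpow hm.le hωpos.le]
      have haq : a ^ q = a * A1 := by
        have h := Real.rpow_add hapos 1 (q-1)
        rw [Real.rpow_one] at h
        rw [show (1:ℝ)+(q-1) = q from by ring] at h
        rw [h, hA1_def]
      have hNq : Nt ^ q = Nt * NQ := by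
        have h := Real.rpow_add hNpos 1 (q-1)
        rw [Real.rpow_one] at h
        rw [show (1:ℝ)+(q-1) = q from by ring] at h
        rw [h, hNQ_def]
      have hDtqe : Dt ^ q = c^q * a^q / Nt^q := by
        rw [hDt2, Real.div_rpow (by positivity) hNpos.le, Real.mul_rpow hc.le hapos.le]
      have hSB12 : Real.sqrt (B t) = (B t) ^ ((1:ℝ)/2) := Real.sqrt_eq_rpow _
      have hBtE : (B t)^(1 - 1/(2*(n:ℝ))) = P * Real.sqrt (B t) := by
        rw [hSB12, hP_def, ← Real.rpow_add hBt]; congr 1; ring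
      have hBpP : Bp = P⁻¹ := by
        rw [hP_def, ← Real.rpow_neg hBt.le, hBp_def]; congr 1; ring
      -- bound on S
      have hn1 : (1:ℝ) ≤ (n:ℝ) := by exact_mod_cast hn
      have hexp1 : 2/(n:ℝ) - 2 ≤ 0 := by
        have h : 2/(n:ℝ) ≤ 2 := by
          rw [div_le_iff₀ (by linarith)]; linarith
        linarith
      have hexp2 : 1/(n:ℝ) - 1 ≤ 0 := by
        have h : 1/(n:ℝ) ≤ 1 := by
          rw [div_le_iff₀ (by linarith)]; linarith
        linarith
      have hsle : s ^ (2/(n:ℝ)-2) ≤ K ^ (2/(n:ℝ)-2) * (B t) ^ (1/(n:ℝ)-1) := by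
        have h1 : (K*Real.sqrt (B t)) ^ (2/(n:ℝ)-2)
            = K ^ (2/(n:ℝ)-2) * (Real.sqrt (B t)) ^ (2/(n:ℝ)-2) :=
          Real.mul_rpow hK.le (Real.sqrt_nonneg _)
        have h2 : (Real.sqrt (B t)) ^ (2/(n:ℝ)-2) = (B t) ^ (1/(n:ℝ)-1) := by
          rw [hSB12, ← Real.rpow_mul hBt.le]; congr 1; ring
        calc s ^ (2/(n:ℝ)-2) ≤ (K*Real.sqrt (B t)) ^ (2/(n:ℝ)-2) :=
              Real.rpow_le_rpow_of_nonpos (by positivity) hs.1.le hexp1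
        _ = K ^ (2/(n:ℝ)-2) * (B t) ^ (1/(n:ℝ)-1) := by rw [h1, h2]
      have hB1' : (1:ℝ) ≤ (B t) ^ (1/(n:ℝ)-1) :=
        Real.one_le_rpow_of_pos_of_le_one_of_nonpos hBt hBt1.le hexp2
      have hW2 : ((R^n - s)*(c/R^n - Dt))^2 ≤ c^2 := pow_le_pow_left₀ hWnn hWub 2
      have hc2 : c^2 = m^2/ω^2 := by rw [hc_def]; rw [div_pow]
      have hSle : S ≤ sq1C * Bp := by
        have h3 : 1 + s ^ (2/(n:ℝ)-2) * ((R^n - s)*(c/R^n - Dt))^2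
            ≤ (1+C) * (B t)^(1/(n:ℝ)-1) := by
          have h4 : s ^ (2/(n:ℝ)-2) * ((R^n-s)*(c/R^n-Dt))^2
              ≤ (K ^ (2/(n:ℝ)-2) * (B t)^(1/(n:ℝ)-1)) * c^2 := by
            apply mul_le_mul hsle hW2 (sq_nonneg _)
            have := Real.rpow_pos_of_pos hK (2/(n:ℝ)-2)
            have := Real.rpow_pos_of_pos hBt (1/(n:ℝ)-1)
            positivity
          have h5 : (K ^ (2/(n:ℝ)-2) * (B t)^(1/(n:ℝ)-1)) * c^2 = C * (B t)^(1/(n:ℝ)-1) := by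
            rw [hC_def, hc2]; ring
          rw [h5] at h4
          linarith [hB1', h4, hCpos.le]
        have h6 : Real.sqrt ((1+C)*(B t)^(1/(n:ℝ)-1)) = sq1C * Bp := by
          rw [hsq1C_def, hBp_def, Real.sqrt_mul (by linarith : (0:ℝ) ≤ 1 + C),
            Real.sqrt_eq_rpow ((B t)^(1/(n:ℝ)-1)), ← Real.rpow_mul hBt.le]
          congr 2
          ring
        rw [hS_def]
        calc Real.sqrt (1 + s ^ (2/(n:ℝ)-2) * ((R^n - s)*(c/R^n - Dt))^2)
            ≤ Real.sqrt ((1+C)*(B t)^(1/(n:ℝ)-1)) := Real.sqrt_le_sqrt h3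
        _ = sq1C * Bp := h6
      -- the differential inequality for B
      have hβle : β ≤ A1 * ((n:ℝ) * m) ^ q * χ * K
          / (2 * (a + b) * KQ * ωq * R ^ n * sq1C) * (B t) ^ (1 - 1 / (2 * (n:ℝ))) := by
        have h := hB' t ht
        rw [hβ_def]
        linarith
      set F : ℝ := c*(a*A1)*nq*mq*χ*K^2*P/(2*ωq*R^n*sq1C) with hF_def
      have hFpos : 0 < F := by
        rw [hF_def]; positivity
      -- chain
      have hstep1 : c*a*N'/Nt^2 ≤ c*a*((a+b)*(β*(K/Real.sqrt (B t))))/Nt^2 := by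
        rw [hN'2]
        apply div_le_div_of_nonneg_right _ (by positivity)
        have h11 : β*(K/Real.sqrt (B t) - b) ≤ β*(K/Real.sqrt (B t)) :=
          mul_le_mul_of_nonneg_left (by linarith) hβpos.le
        have h12 : (a+b)*(β*(K/Real.sqrt (B t) - b)) ≤ (a+b)*(β*(K/Real.sqrt (B t))) :=
          mul_le_mul_of_nonneg_left h11 habpos.le
        exact mul_le_mul_of_nonneg_left h12 (by positivity)
      have hstep2 : c*a*((a+b)*(β*(K/Real.sqrt (B t))))/Nt^2
          ≤ c*a*((a+b)*((A1 * ((n:ℝ) * m) ^ q * χ * K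
            / (2 * (a + b) * KQ * ωq * R ^ n * sq1C) * (B t) ^ (1 - 1 / (2 * (n:ℝ))))
              *(K/Real.sqrt (B t))))/Nt^2 := by
        apply div_le_div_of_nonneg_right _ (by positivity)
        have h13 : β*(K/Real.sqrt (B t))
            ≤ (A1 * ((n:ℝ) * m) ^ q * χ * K
            / (2 * (a + b) * KQ * ωq * R ^ n * sq1C) * (B t) ^ (1 - 1 / (2 * (n:ℝ))))
              *(K/Real.sqrt (B t)) :=
          mul_le_mul_of_nonneg_right hβle (by positivity)
        have h14 := mul_le_mul_of_nonneg_left h13 habpos.le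
        exact mul_le_mul_of_nonneg_left h14 (by positivity)
      have hstep3 : c*a*((a+b)*((A1 * ((n:ℝ) * m) ^ q * χ * K
            / (2 * (a + b) * KQ * ωq * R ^ n * sq1C) * (B t) ^ (1 - 1 / (2 * (n:ℝ))))
              *(K/Real.sqrt (B t))))/Nt^2 = F / (KQ * Nt^2) := by
        rw [hBtE, hnm, hF_def]
        field_simp
      have hstep4 : F / (KQ * Nt^2) ≤ F / (NQ * Nt^2) := by
        apply div_le_div_of_nonneg_left hFpos.le (by positivity)
        exact mul_le_mul_of_nonneg_right hNQKQ (by positivity)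
      have hstep5 : F / (NQ * Nt^2) = nq*χ*((c*K^2/(2*R^n*Nt))*(Dt^q))/(sq1C*Bp) := by
        rw [hDtqe, hcq, haq, hNq, hBpP, hF_def]
        field_simp
      have hstep6 : nq*χ*((c*K^2/(2*R^n*Nt))*(Dt^q))/(sq1C*Bp)
          ≤ nq*χ*((c/R^n - Dt)*Dt^q)/S := by
        apply div_le_div₀ (mul_nonneg (mul_nonneg hnqpos.le hχ.le)
          (mul_nonneg hGpos.le hDtq0)) _ hSpos hSle
        exact mul_le_mul_of_nonneg_left (mul_le_mul_of_nonneg_right hGlb hDtq0) (by positivity)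
      exact le_trans hstep1 (le_trans hstep2 (le_trans (le_of_eq hstep3)
        (le_trans hstep4 (le_trans (le_of_eq hstep5) hstep6))))
end

section
/- Let n ∈ ℕ, m > 0, λ ∈ [1/3,1], K > 0 with K ≥ √(b_λ Rⁿ), T > 0, and let B ∈ C¹([0,T)) be positive and nonincreasing with B(t) ≤ K²/(4(a_λ + b_λ)²) and K√(B(t)) < Rⁿ for all t ∈ [0,T). Then A′(t) ≤ 0 for all t ∈ (0,T), and in particular A(t) ≥ A_T := (m/ω_n)·1/(1 + a_λ Rⁿ/K²) for all t ∈ (0,T). -/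
open Real Set

set_option maxHeartbeats 1000000 in
/-- `A' ≤ 0` on `(0,T)`, and in particular `A(t) ≥ A_T` there. -/
theorem stmt9 (n : ℕ) (hn : 0 < n) (R m l K T : ℝ) (hR : 0 < R) (hm : 0 < m)
    (hl : l ∈ Set.Icc (1/3 : ℝ) 1) (hK : 0 < K) (hKb : Real.sqrt (bL l * R ^ n) ≤ K)
    (hT : 0 < T)
    (B B' : ℝ → ℝ)
    (hB : ∀ t ∈ Set.Ico (0 : ℝ) T, HasDerivAt B (B' t) t)
    (hB'c : ContinuousOn B' (Set.Ico 0 T))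
    (hBpos : ∀ t ∈ Set.Ico (0 : ℝ) T, 0 < B t)
    (hBanti : AntitoneOn B (Set.Ico 0 T))
    (hBle : ∀ t ∈ Set.Ico (0 : ℝ) T, B t ≤ K ^ 2 / (4 * (aL l + bL l) ^ 2))
    (hBR : ∀ t ∈ Set.Ico (0 : ℝ) T, K * Real.sqrt (B t) < R ^ n) :
    ∀ t ∈ Set.Ioo (0 : ℝ) T,
      deriv (Af m (omegaN n) l R K n B) t ≤ 0 ∧
      AT m (omegaN n) l R K n ≤ Af m (omegaN n) l R K n B t := by
  intro t ht
  obtain ⟨hl1, hl2⟩ := hl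
  have hl0 : (0:ℝ) < l := lt_of_lt_of_le (by norm_num) hl1
  have ht' : t ∈ Set.Ico (0:ℝ) T := ⟨ht.1.le, ht.2⟩
  have ha0 : 0 ≤ aL l := div_nonneg (sq_nonneg _) (by linarith)
  have hb0 : 0 ≤ bL l := div_nonneg (by linarith) (by linarith)
  have hb1 : bL l ≤ 1 := by
    rw [bL, div_le_one (by linarith)]; linarith
  have hab : aL l + bL l = (l+1)/2 := by
    rw [aL, bL]; field_simp; ring
  have hab0 : (2:ℝ)/3 ≤ aL l + bL l := by rw [hab]; linarith
  have hRn : 0 < R ^ n := pow_pos hR n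
  have hK2b : bL l * R ^ n ≤ K ^ 2 := by
    have h1 : Real.sqrt (bL l * R ^ n) ^ 2 = bL l * R ^ n :=
      Real.sq_sqrt (mul_nonneg hb0 hRn.le)
    nlinarith [Real.sqrt_nonneg (bL l * R ^ n)]
  have hBt : 0 < B t := hBpos t ht'
  set s := Real.sqrt (B t) with hs_def
  have hs0 : 0 < s := Real.sqrt_pos.mpr hBt
  have hsB : s ^ 2 = B t := Real.sq_sqrt hBt.le
  have hsle : 2 * (aL l + bL l) * s ≤ K := by
    have h1 : B t ≤ K ^ 2 / (4 * (aL l + bL l) ^ 2) := hBle t ht'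
    have hd : (0:ℝ) < 4 * (aL l + bL l) ^ 2 := by nlinarith
    have h2 : (2 * (aL l + bL l) * s) ^ 2 ≤ K ^ 2 := by
      have h3 : B t * (4 * (aL l + bL l) ^ 2) ≤ K ^ 2 := (le_div_iff₀ hd).mp h1
      nlinarith
    nlinarith [mul_nonneg (mul_nonneg (by norm_num : (0:ℝ) ≤ 2) (by linarith : (0:ℝ) ≤ aL l + bL l)) hs0.le]
  have hbsK : bL l * s < K := by nlinarith
  have hNpos : 0 < Nf l R K n B t := by
    rw [Nf, ← hs_def, ← hsB]
    have h2Ks : 2 * (aL l + bL l) * K * s ≤ K ^ 2 := by nlinarith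
    rcases eq_or_lt_of_le ha0 with haz | hap
    · have hbge : (2:ℝ)/3 ≤ bL l := by linarith [hab0, haz]
      nlinarith [mul_pos (sub_pos.mpr hbsK) (sub_pos.mpr hbsK)]
    · nlinarith [mul_nonneg (mul_nonneg (by linarith : (0:ℝ) ≤ aL l + bL l) hb0) (sq_nonneg s)]
  have hωn : 0 < omegaN n := by
    rw [omegaN]
    refine mul_pos (by exact_mod_cast hn) (ENNReal.toReal_pos ?_ ?_)
    · exact (Metric.measure_ball_pos _ _ one_pos).ne'
    · exact MeasureTheory.measure_ball_lt_top.ne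
  have hω : 0 < m / omegaN n := div_pos hm hωn
  -- derivative of B is nonpositive
  have hBd := hB t ht'
  have hB'le : B' t ≤ 0 := by
    have htend : Filter.Tendsto (slope B t) (nhdsWithin t (Set.Ioi t)) (nhds (B' t)) :=
      (hasDerivAt_iff_tendsto_slope.mp hBd).mono_left
        (nhdsWithin_mono _ (fun u hu => Set.mem_compl_singleton_iff.mpr (Set.mem_Ioi.mp hu).ne'))
    refine le_of_tendsto htend ?_
    filter_upwards [Ioo_mem_nhdsGT_of_mem ⟨le_refl t, ht.2⟩] with u hu
    rw [slope_def_field]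
    apply div_nonpos_of_nonpos_of_nonneg
    · have := hBanti ht' ⟨le_trans ht.1.le hu.1.le, hu.2⟩ hu.1.le
      linarith
    · linarith [hu.1]
  set s' := B' t / (2 * s) with hs'_def
  have hs'0 : s' ≤ 0 := div_nonpos_of_nonpos_of_nonneg hB'le (by linarith)
  have hB'eq : B' t = 2 * s * s' := by
    rw [hs'_def]; field_simp
  -- derivative computations
  have hsd : HasDerivAt (fun τ => Real.sqrt (B τ)) s' t := by
    have := hBd.sqrt hBt.ne'
    rw [hs'_def, hs_def]; exact this
  have hud : HasDerivAt
      (fun τ => (m / omegaN n) * (K ^ 2 - 2 * bL l * K * Real.sqrt (B τ) + (bL l) ^ 2 * B τ))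
      ((m / omegaN n) * (-(2 * bL l * K * s') + (bL l) ^ 2 * B' t)) t := by
    have h1 : HasDerivAt
        (fun τ => K ^ 2 - 2 * bL l * K * Real.sqrt (B τ) + (bL l) ^ 2 * B τ)
        (0 - 2 * bL l * K * s' + (bL l) ^ 2 * B' t) t :=
      ((hasDerivAt_const t (K ^ 2)).sub (hsd.const_mul (2 * bL l * K))).add
        (hBd.const_mul ((bL l) ^ 2))
    have := h1.const_mul (m / omegaN n)
    exact this.congr_deriv (by ring)
  have hNd : HasDerivAt (fun τ => Nf l R K n B τ)
      (-((aL l + bL l) * (2 * K * s' - bL l * B' t))) t := by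
    unfold Nf
    have h1 : HasDerivAt
        (fun τ => K ^ 2 + aL l * R ^ n - (aL l + bL l) * (2 * K * Real.sqrt (B τ) - bL l * B τ))
        (0 - (aL l + bL l) * (2 * K * s' - bL l * B' t)) t := by
      exact (hasDerivAt_const t (K ^ 2 + aL l * R ^ n)).sub
        (((hsd.const_mul (2 * K)).sub (hBd.const_mul (bL l))).const_mul (aL l + bL l))
    convert h1 using 1; ring
  have hAfd : HasDerivAt (Af m (omegaN n) l R K n B)
      (((m / omegaN n) * (-(2 * bL l * K * s') + (bL l) ^ 2 * B' t) * Nf l R K n B t -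
        (m / omegaN n) * (K ^ 2 - 2 * bL l * K * Real.sqrt (B t) + (bL l) ^ 2 * B t) *
          (-((aL l + bL l) * (2 * K * s' - bL l * B' t)))) / (Nf l R K n B t) ^ 2) t := by
    exact hud.div hNd hNpos.ne'
  constructor
  · rw [hAfd.deriv]
    apply div_nonpos_of_nonpos_of_nonneg _ (sq_nonneg _)
    have hNval : Nf l R K n B t =
        K ^ 2 + aL l * R ^ n - (aL l + bL l) * (2 * K * s - bL l * s ^ 2) := by
      rw [Nf, ← hs_def, ← hsB]
    have hfac : (-(2 * bL l * K * s') + (bL l) ^ 2 * B' t) * Nf l R K n B t -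
        (K ^ 2 - 2 * bL l * K * Real.sqrt (B t) + (bL l) ^ 2 * B t) *
          (-((aL l + bL l) * (2 * K * s' - bL l * B' t))) =
        2 * s' * (K - bL l * s) * (aL l * (K ^ 2 - bL l * R ^ n)) := by
      rw [hNval, ← hs_def, ← hsB, hB'eq]; ring
    have hsign : 2 * s' * (K - bL l * s) * (aL l * (K ^ 2 - bL l * R ^ n)) ≤ 0 := by
      have h1 : 2 * s' * (K - bL l * s) ≤ 0 :=
        mul_nonpos_of_nonpos_of_nonneg (by linarith) (by linarith)
      exact mul_nonpos_of_nonpos_of_nonneg h1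
        (mul_nonneg ha0 (by linarith))
    nlinarith [hfac, hsign, hω.le]
  · have hKaR : (0:ℝ) < K ^ 2 + aL l * R ^ n := by positivity
    have hATeq : AT m (omegaN n) l R K n = (m / omegaN n) * K ^ 2 / (K ^ 2 + aL l * R ^ n) := by
      have h : 1 + aL l * R ^ n / K ^ 2 = (K ^ 2 + aL l * R ^ n) / K ^ 2 := by
        field_simp
      rw [AT, h, one_div_div]
      ring
    rw [hATeq, Af, Nf, ← hs_def, ← hsB]
    rw [div_le_div_iff₀ hKaR (by rw [Nf, ← hs_def, ← hsB] at hNpos; exact hNpos)]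
    have key2 : K ^ 2 * (K ^ 2 + aL l * R ^ n - (aL l + bL l) * (2 * K * s - bL l * s ^ 2)) ≤
        (K ^ 2 - 2 * bL l * K * s + (bL l) ^ 2 * s ^ 2) * (K ^ 2 + aL l * R ^ n) := by
      have hdiff : (K ^ 2 - 2 * bL l * K * s + (bL l) ^ 2 * s ^ 2) * (K ^ 2 + aL l * R ^ n) -
          K ^ 2 * (K ^ 2 + aL l * R ^ n - (aL l + bL l) * (2 * K * s - bL l * s ^ 2)) =
          aL l * (K ^ 2 - bL l * R ^ n) * s * (2 * K - bL l * s) := by ring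
      nlinarith [mul_nonneg (mul_nonneg (mul_nonneg ha0 (by linarith : (0:ℝ) ≤ K ^ 2 - bL l * R ^ n)) hs0.le) (by linarith : (0:ℝ) ≤ 2 * K - bL l * s)]
    nlinarith [mul_le_mul_of_nonneg_left key2 hω.le]
end

section
/- Let n ∈ ℕ, m > 0, λ ∈ [1/3,1], K > 0 with K ≥ √(b_λ Rⁿ), and let B₀ ∈ (0,1) satisfy K√B₀ < Rⁿ, B₀ ≤ K²/(4(a_λ + b_λ)²), and B₀ < 2λn A_T/(e^d μ), where μ := mn/(ω_n Rⁿ). If for some T > 0 the function B ∈ C¹([0,T)) is positive and nonincreasing with B(0) ≤ B₀, then A(t)φ(ξ) − (μ/n)B(t)ξ > 0 for all t ∈ (0,T) and all s ∈ (0,B(t)), where ξ := s/B(t). -/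
open Real Set

private lemma aux_half {c u K : ℝ} (hK : 0 < K) (h : 4 * c ^ 2 * u ^ 2 ≤ K ^ 2) :
    2 * c * u ≤ K := by
  nlinarith [sq_nonneg (2 * c * u - K), mul_pos hK hK]

private lemma aux_N {a b K Rn u : ℝ} (ha : 0 ≤ a) (hb : 0 ≤ b) (hab : 2/3 ≤ a + b)
    (hK : 0 < K) (hRn : 0 < Rn) (hu : 0 < u) (hhalf : 2 * (a + b) * u ≤ K) :
    0 < K ^ 2 + a * Rn - (a + b) * (2 * K * u - b * u ^ 2) := by
  have h1 : 2 * (a + b) * u * K ≤ K ^ 2 := by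
    nlinarith [mul_le_mul_of_nonneg_right hhalf hK.le]
  rcases hb.lt_or_eq with hbpos | hb0
  · nlinarith [mul_pos (mul_pos (by linarith : (0:ℝ) < a + b) hbpos) (pow_pos hu 2),
      mul_nonneg ha hRn.le]
  · nlinarith [mul_pos (by linarith : (0:ℝ) < a) hRn, mul_nonneg hb (sq_nonneg u)]

private lemma aux_key {a b K Rn u : ℝ} (ha : 0 ≤ a) (hu : 0 ≤ u)
    (h2K : 0 ≤ 2 * K - b * u) (hKb : b * Rn ≤ K ^ 2) :
    K ^ 2 * (K ^ 2 + a * Rn - (a + b) * (2 * K * u - b * u ^ 2))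
      ≤ (K ^ 2 - 2 * b * K * u + b ^ 2 * u ^ 2) * (K ^ 2 + a * Rn) := by
  nlinarith [mul_nonneg (mul_nonneg (mul_nonneg hu h2K) ha)
    (by linarith : (0:ℝ) ≤ K ^ 2 - b * Rn)]

/-- Very inner region positivity:
`A(t)φ(ξ) − (μ/n)B(t)ξ > 0` for `t ∈ (0,T)` and `s ∈ (0,B(t))`, `ξ = s/B(t)`. -/
theorem stmt10 (n : ℕ) (hn : 0 < n) (R m l K T d B0 : ℝ) (hR : 0 < R) (hm : 0 < m)
    (hl : l ∈ Set.Icc (1/3 : ℝ) 1) (hK : 0 < K) (hKb : Real.sqrt (bL l * R ^ n) ≤ K)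
    (hT : 0 < T)
    (hd : d ∈ Set.Ioo (1 : ℝ) 2) (hde : (2 - d) * Real.exp d - 2 = 0)
    (hB0 : B0 ∈ Set.Ioo (0 : ℝ) 1) (hB0R : K * Real.sqrt B0 < R ^ n)
    (hB0le : B0 ≤ K ^ 2 / (4 * (aL l + bL l) ^ 2))
    (hB0small : B0 < 2 * l * (n : ℝ) * AT m (omegaN n) l R K n
        / (Real.exp d * ((m * n) / (omegaN n * R ^ n))))
    (B B' : ℝ → ℝ)
    (hB : ∀ t ∈ Set.Ico (0 : ℝ) T, HasDerivAt B (B' t) t)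
    (hB'c : ContinuousOn B' (Set.Ico 0 T))
    (hBpos : ∀ t ∈ Set.Ico (0 : ℝ) T, 0 < B t)
    (hBanti : AntitoneOn B (Set.Ico 0 T))
    (hBinit : B 0 ≤ B0) :
    ∀ t ∈ Set.Ioo (0 : ℝ) T, ∀ s ∈ Set.Ioo (0 : ℝ) (B t),
      0 < Af m (omegaN n) l R K n B t * phi l d (s / B t)
          - (((m * n) / (omegaN n * R ^ n)) / (n : ℝ)) * B t * (s / B t) := by
  intro t ht s hs
  have hl1 : (1/3:ℝ) ≤ l := hl.1
  have hl2 : l ≤ 1 := hl.2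
  have hlpos : (0:ℝ) < l := by linarith
  have hRn : (0:ℝ) < R ^ n := pow_pos hR n
  have hn' : (0:ℝ) < (n:ℝ) := by exact_mod_cast hn
  have hωpos : 0 < omegaN n := by
    have h1 : (0:ℝ) < (MeasureTheory.volume
        (Metric.ball (0 : EuclideanSpace ℝ (Fin n)) 1)).toReal := by
      refine ENNReal.toReal_pos ?_ ?_
      · exact (Metric.measure_ball_pos _ _ (by norm_num)).ne'
      · exact MeasureTheory.measure_ball_lt_top.ne
    exact mul_pos hn' h1
  set ωn := omegaN n with hωn
  have ha : 0 ≤ aL l := div_nonneg (sq_nonneg _) (by linarith)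
  have hb : 0 ≤ bL l := div_nonneg (by linarith) (by linarith)
  have hab : aL l + bL l = (l+1)/2 := by
    unfold aL bL; field_simp; ring
  have habpos : 0 < aL l + bL l := by rw [hab]; linarith
  have hKb2 : bL l * R ^ n ≤ K ^ 2 := by
    rw [← Real.sq_sqrt (mul_nonneg hb hRn.le)]
    exact pow_le_pow_left₀ (Real.sqrt_nonneg _) hKb 2
  -- facts about B t
  have htmem : t ∈ Set.Ico (0:ℝ) T := ⟨ht.1.le, ht.2⟩
  have hBt : 0 < B t := hBpos t htmem
  have hBB0 : B t ≤ B0 :=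
    (hBanti ⟨le_refl 0, hT⟩ htmem ht.1.le).trans hBinit
  set u := Real.sqrt (B t) with hudef
  have hu : 0 < u := Real.sqrt_pos.2 hBt
  have hu2 : u ^ 2 = B t := Real.sq_sqrt hBt.le
  have hB0q : B t ≤ K ^ 2 / (4 * (aL l + bL l) ^ 2) := hBB0.trans hB0le
  have h4 : 4 * (aL l + bL l) ^ 2 * u ^ 2 ≤ K ^ 2 := by
    rw [le_div_iff₀ (by positivity)] at hB0q
    rw [hu2]; linarith
  have hhalf : 2 * (aL l + bL l) * u ≤ K := aux_half hK h4
  have h2Kbu : 0 ≤ 2 * K - bL l * u := by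
    have hexp : 2 * (aL l + bL l) * u = 2 * (aL l * u) + 2 * (bL l * u) := by ring
    linarith [mul_nonneg ha hu.le]
  have hNval : Nf l R K n B t
      = K ^ 2 + aL l * R ^ n - (aL l + bL l) * (2 * K * u - bL l * u ^ 2) := by
    rw [Nf, ← hu2, Real.sqrt_sq hu.le]
  have hN : 0 < Nf l R K n B t := by
    rw [hNval]
    exact aux_N ha hb (by rw [hab]; linarith) hK hRn hu hhalf
  have hS : 0 < K ^ 2 + aL l * R ^ n := by
    linarith [mul_nonneg ha hRn.le, pow_pos hK 2]
  have hATval : AT m ωn l R K n = (m / ωn) * K ^ 2 / (K ^ 2 + aL l * R ^ n) := by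
    rw [AT]
    rw [show (1 + aL l * R ^ n / K ^ 2) = (K ^ 2 + aL l * R ^ n) / K ^ 2 by
      field_simp]
    rw [one_div_div, ← mul_div_assoc]
  have hATpos : 0 < AT m ωn l R K n := by
    rw [hATval]
    exact div_pos (mul_pos (div_pos hm hωpos) (pow_pos hK 2)) hS
  have hAfval : Af m ωn l R K n B t
      = (m / ωn) * (K ^ 2 - 2 * bL l * K * u + (bL l) ^ 2 * u ^ 2)
        / Nf l R K n B t := by
    rw [Af, ← hu2, Real.sqrt_sq hu.le]
  have hmω : 0 ≤ m / ωn := (div_pos hm hωpos).le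
  have key := aux_key (a := aL l) (b := bL l) (K := K) (Rn := R ^ n) (u := u)
    ha hu.le h2Kbu hKb2
  have hAT_le_Af : AT m ωn l R K n ≤ Af m ωn l R K n B t := by
    rw [hATval, hAfval, div_le_div_iff₀ hS hN, hNval]
    linarith [mul_le_mul_of_nonneg_left key hmω]
  -- phi bounds
  set ξ := s / B t with hξdef
  have hξ0 : 0 < ξ := div_pos hs.1 hBt
  have hξ1 : ξ < 1 := (div_lt_one hBt).2 hs.2
  have hd0 : (0:ℝ) < d := by linarith [hd.1]
  have hE : (0:ℝ) < Real.exp d := Real.exp_pos d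
  have hφ : phi l d ξ = 2 * l / (d * Real.exp d) * (Real.exp (d * ξ) - 1) :=
    if_pos hξ1
  have hc : 0 < 2 * l / (d * Real.exp d) := div_pos (by linarith) (mul_pos hd0 hE)
  have hφge : 2 * l / Real.exp d * ξ ≤ phi l d ξ := by
    have heq : 2 * l / Real.exp d * ξ = 2 * l / (d * Real.exp d) * (d * ξ) := by
      field_simp
    rw [heq, hφ]
    exact mul_le_mul_of_nonneg_left (by linarith [Real.add_one_le_exp (d * ξ)]) hc.le
  have hφpos : 0 < phi l d ξ :=
    lt_of_lt_of_le (mul_pos (div_pos (by linarith) hE) hξ0) hφge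
  -- the smallness condition
  set μv := (m * n) / (ωn * R ^ n) with hμvdef
  have hμv : 0 < μv := div_pos (mul_pos hm hn') (mul_pos hωpos hRn)
  have h1 : B0 * (Real.exp d * μv) < 2 * l * n * AT m ωn l R K n :=
    (lt_div_iff₀ (mul_pos hE hμv)).1 hB0small
  have hfinal : μv / n * B t < AT m ωn l R K n * (2 * l / Real.exp d) := by
    rw [div_mul_eq_mul_div, div_lt_iff₀ hn']
    rw [show AT m ωn l R K n * (2 * l / Real.exp d) * n
        = (2 * l * n * AT m ωn l R K n) / Real.exp d by field_simp]
    rw [lt_div_iff₀ hE]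
    have h2 : B t * (Real.exp d * μv) ≤ B0 * (Real.exp d * μv) :=
      mul_le_mul_of_nonneg_right hBB0 (mul_pos hE hμv).le
    linarith
  have hint1 : AT m ωn l R K n * phi l d ξ ≤ Af m ωn l R K n B t * phi l d ξ :=
    mul_le_mul_of_nonneg_right hAT_le_Af hφpos.le
  have hint2 : AT m ωn l R K n * (2 * l / Real.exp d * ξ) ≤ AT m ωn l R K n * phi l d ξ :=
    mul_le_mul_of_nonneg_left hφge hATpos.le
  have hint3 : (μv / n * B t) * ξ < AT m ωn l R K n * (2 * l / Real.exp d) * ξ :=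
    mul_lt_mul_of_pos_right hfinal hξ0
  linarith [hint1, hint2, hint3]
end

section
/- Let n = 1, χ > 0, p, q ≥ 1 with p ≤ q, m > 0, λ ∈ [1/3,1], K > 0 with K ≥ √(b_λ R), and let B₀ ∈ (0,1) satisfy K√B₀ ≤ R, B₀ ≤ K²/(4(a_λ + b_λ)²), and B₀ < 2λ A_T/(e^d μ), where μ := m/(ω₁ R). If for some T > 0 the function B ∈ C¹([0,T)) is positive and nonincreasing with B(0) ≤ B₀ and B′(t) ≥ −(d/√(d²+1))·(2λ A_T/e^d)^{p−1} for all t ∈ (0,T), then (𝒫 w_in)(s,t) ≤ 0 for all t ∈ (0,T) and all s ∈ (0,B(t)). -/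
open Real Set

set_option maxHeartbeats 4000000 in
/-- Very inner region, `n = 1`: under the stated conditions on `B`,
`(𝒫 w_in)(s,t) ≤ 0` for all `t ∈ (0,T)` and `s ∈ (0,B(t))`. -/
theorem stmt11 (R χ p q m l K T d B0 : ℝ) (hR : 0 < R) (hχ : 0 < χ)
    (hp : 1 ≤ p) (hq : 1 ≤ q) (hpq : p ≤ q) (hm : 0 < m)
    (hl : l ∈ Set.Icc (1/3 : ℝ) 1) (hK : 0 < K) (hKb : Real.sqrt (bL l * R) ≤ K)
    (hT : 0 < T)
    (hd : d ∈ Set.Ioo (1 : ℝ) 2) (hde : (2 - d) * Real.exp d - 2 = 0)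
    (hB0 : B0 ∈ Set.Ioo (0 : ℝ) 1) (hB0R : K * Real.sqrt B0 ≤ R)
    (hB0le : B0 ≤ K ^ 2 / (4 * (aL l + bL l) ^ 2))
    (hB0small : B0 < 2 * l * AT m (omegaN 1) l R K 1
        / (Real.exp d * (m / (omegaN 1 * R))))
    (B B' : ℝ → ℝ)
    (hB : ∀ t ∈ Set.Ico (0 : ℝ) T, HasDerivAt B (B' t) t)
    (hB'c : ContinuousOn B' (Set.Ico 0 T))
    (hBpos : ∀ t ∈ Set.Ico (0 : ℝ) T, 0 < B t)
    (hBanti : AntitoneOn B (Set.Ico 0 T))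
    (hBinit : B 0 ≤ B0)
    (hB' : ∀ t ∈ Set.Ioo (0 : ℝ) T,
      B' t ≥ -(d / Real.sqrt (d ^ 2 + 1))
        * (2 * l * AT m (omegaN 1) l R K 1 / Real.exp d) ^ (p - 1)) :
    ∀ t ∈ Set.Ioo (0 : ℝ) T, ∀ s ∈ Set.Ioo (0 : ℝ) (B t),
      Pop 1 χ p q (m / (omegaN 1 * R))
        (fun σ τ => Af m (omegaN 1) l R K 1 B τ * phi l d (σ / B τ)) s t ≤ 0 := by
  intro t ht s hs
  obtain ⟨ht0, htT⟩ := ht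
  obtain ⟨hs0, hsB⟩ := hs
  have htI : t ∈ Set.Ico (0 : ℝ) T := ⟨le_of_lt ht0, htT⟩
  -- unfold the operator for n = 1
  simp only [Pop, Nat.cast_one]
  rw [show (2:ℝ) - 2/1 = 0 by norm_num, show (2:ℝ)/1 - 2 = 0 by norm_num]
  simp only [Real.rpow_zero, Real.one_rpow, one_pow, one_mul, mul_one, div_one]
  -- abbreviations
  set ω := omegaN 1 with hωdef
  have hω : 0 < ω := by
    have hpos := Metric.measure_ball_pos MeasureTheory.volume
      (0 : EuclideanSpace ℝ (Fin 1)) one_pos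
    have hfin : MeasureTheory.volume (Metric.ball (0 : EuclideanSpace ℝ (Fin 1)) 1) < ⊤ :=
      MeasureTheory.measure_ball_lt_top
    have h1 : (0:ℝ) <
        (MeasureTheory.volume (Metric.ball (0 : EuclideanSpace ℝ (Fin 1)) 1)).toReal :=
      ENNReal.toReal_pos hpos.ne' hfin.ne
    rw [hωdef]
    simpa [omegaN] using h1
  obtain ⟨hl13, hl1⟩ := hl
  have hl0 : (0:ℝ) < l := lt_of_lt_of_le (by norm_num) hl13
  have ha0 : 0 ≤ aL l := div_nonneg (sq_nonneg _) (by linarith)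
  have hb0 : 0 ≤ bL l := div_nonneg (by linarith) (by linarith)
  have hab : aL l + bL l = (l+1)/2 := by rw [aL, bL]; field_simp; ring
  have habpos : 0 < aL l + bL l := by rw [hab]; linarith
  obtain ⟨hB00, hB01⟩ := hB0
  have hd1 : (1:ℝ) < d := hd.1
  have hd0 : (0:ℝ) < d := by linarith
  have hed : (0:ℝ) < Real.exp d := Real.exp_pos d
  have hmω : (0:ℝ) < m / ω := div_pos hm hω
  have hμ : 0 < m / (ω * R) := div_pos hm (mul_pos hω hR)
  -- facts about B at t
  have hBder : HasDerivAt B (B' t) t := hB t htI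
  have hBt : 0 < B t := hBpos t htI
  have hB0t : B t ≤ B 0 := hBanti ⟨le_refl 0, hT⟩ htI ht0.le
  have hBtB0 : B t ≤ B0 := hB0t.trans hBinit
  have hBt1 : B t < 1 := lt_of_le_of_lt hBtB0 hB01
  set u := Real.sqrt (B t) with hudef
  have hu0 : 0 < u := Real.sqrt_pos.mpr hBt
  have hu2 : u ^ 2 = B t := Real.sq_sqrt hBt.le
  -- K facts
  have hbR : bL l * R ≤ K ^ 2 := by
    have h := Real.sq_sqrt (mul_nonneg hb0 hR.le)
    nlinarith [Real.sqrt_nonneg (bL l * R), hKb]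
  have hub : (aL l + bL l) * u ≤ K / 2 := by
    have h1 : u ≤ Real.sqrt (K ^ 2 / (4 * (aL l + bL l) ^ 2)) := by
      rw [hudef]; exact Real.sqrt_le_sqrt (hBtB0.trans hB0le)
    have h2 : Real.sqrt (K ^ 2 / (4 * (aL l + bL l) ^ 2)) = K / (2 * (aL l + bL l)) := by
      rw [show K ^ 2 / (4 * (aL l + bL l) ^ 2) = (K / (2 * (aL l + bL l))) ^ 2 by
          rw [div_pow]; congr 1; ring,
        Real.sqrt_sq (div_nonneg hK.le (by linarith))]
    rw [h2] at h1
    calc (aL l + bL l) * u ≤ (aL l + bL l) * (K / (2 * (aL l + bL l))) :=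
          mul_le_mul_of_nonneg_left h1 habpos.le
      _ = K / 2 := by field_simp
  have hbu : bL l * u ≤ K / 2 :=
    le_trans (mul_le_mul_of_nonneg_right (by linarith : bL l ≤ aL l + bL l) hu0.le) hub
  have hKbu : 0 ≤ K - bL l * u := by linarith
  -- N positivity
  have hNpos : 0 < Nf l R K 1 B t := by
    have hcase : 0 < aL l * R + (aL l + bL l) * (bL l * B t) := by
      rcases eq_or_lt_of_le hb0 with hbz | hbz
      · have haz : aL l = (l+1)/2 := by rw [← hab, ← hbz]; ring
        have h5 : 0 < aL l * R := by rw [haz]; exact mul_pos (by linarith) hR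
        linarith only [h5, mul_nonneg (mul_nonneg habpos.le hb0) hBt.le]
      · linarith only [mul_nonneg ha0 hR.le, mul_pos habpos (mul_pos hbz hBt)]
    have h2K : 2 * K * ((aL l + bL l) * u) ≤ 2 * K * (K / 2) :=
      mul_le_mul_of_nonneg_left hub (by linarith)
    simp only [Nf, pow_one, ← hudef]
    nlinarith [hcase, h2K]
  -- A_T facts
  have hK2aR : (0:ℝ) < K ^ 2 + aL l * R := by
    linarith only [mul_nonneg ha0 hR.le, pow_pos hK 2]
  have hATeq : AT m ω l R K 1 = (m / ω) * K ^ 2 / (K ^ 2 + aL l * R) := by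
    simp only [AT, pow_one]
    rw [show 1 + aL l * R / K ^ 2 = (K ^ 2 + aL l * R) / K ^ 2 from by
        field_simp [hK.ne'],
      one_div_div, ← mul_div_assoc]
  have hATpos : 0 < AT m ω l R K 1 := by
    rw [hATeq]
    exact div_pos (mul_pos hmω (pow_pos hK 2)) hK2aR
  -- A ≥ A_T
  have hAge : AT m ω l R K 1 ≤ Af m ω l R K 1 B t := by
    have hGN : K ^ 2 / (K ^ 2 + aL l * R) ≤
        (K ^ 2 - 2 * bL l * K * u + bL l ^ 2 * B t) / Nf l R K 1 B t := by
      rw [div_le_div_iff₀ hK2aR hNpos]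
      simp only [Nf, pow_one, ← hudef]
      rw [← hu2]
      have hdiff : (K ^ 2 - 2 * bL l * K * u + bL l ^ 2 * u ^ 2) * (K ^ 2 + aL l * R)
          - K ^ 2 * (K ^ 2 + aL l * R - (aL l + bL l) * (2 * K * u - bL l * u ^ 2))
          = aL l * (K ^ 2 - bL l * R) * (u * (2 * K - bL l * u)) := by ring
      have hrh : 0 ≤ aL l * (K ^ 2 - bL l * R) * (u * (2 * K - bL l * u)) :=
        mul_nonneg (mul_nonneg ha0 (by linarith)) (mul_nonneg hu0.le (by linarith))
      linarith only [hdiff, hrh]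
    calc AT m ω l R K 1 = (m / ω) * (K ^ 2 / (K ^ 2 + aL l * R)) := by
          rw [hATeq, mul_div_assoc]
      _ ≤ (m / ω) * ((K ^ 2 - 2 * bL l * K * u + bL l ^ 2 * B t) / Nf l R K 1 B t) :=
          mul_le_mul_of_nonneg_left hGN hmω.le
      _ = Af m ω l R K 1 B t := by
          simp only [Af]
          rw [hudef, mul_div_assoc]
  have hApos : 0 < Af m ω l R K 1 B t := lt_of_lt_of_le hATpos hAge
  -- geometry of ξ
  set ξ := s / B t with hξdef
  have hξ0 : 0 < ξ := div_pos hs0 hBt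
  have hξ1 : ξ < 1 := (div_lt_one hBt).mpr hsB
  set E := Real.exp (d * ξ) with hEdef
  have hE0 : 0 < E := Real.exp_pos _
  have hE1 : 1 ≤ E := by
    rw [hEdef]; exact Real.one_le_exp (mul_nonneg hd0.le hξ0.le)
  have hc1 : (0:ℝ) < 2 * l / (d * Real.exp d) :=
    div_pos (by linarith) (mul_pos hd0 hed)
  have hφeq : phi l d ξ = 2 * l / (d * Real.exp d) * (E - 1) := by
    rw [phi, if_pos hξ1]
  have hφ0 : 0 ≤ phi l d ξ := by
    rw [hφeq]; exact mul_nonneg hc1.le (by linarith)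
  have hφlin : 2 * l / Real.exp d * ξ ≤ phi l d ξ := by
    rw [hφeq]
    have hexp : d * ξ + 1 ≤ E := by rw [hEdef]; exact Real.add_one_le_exp _
    calc 2 * l / Real.exp d * ξ = 2 * l / (d * Real.exp d) * (d * ξ) := by
          field_simp
      _ ≤ 2 * l / (d * Real.exp d) * (E - 1) :=
          mul_le_mul_of_nonneg_left (by linarith) hc1.le
  -- the slope quantities
  set A := Af m ω l R K 1 B t with hAdef
  set M := 2 * l * AT m ω l R K 1 / Real.exp d with hMdef
  have hM0 : 0 < M := by
    rw [hMdef]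
    exact div_pos (mul_pos (by linarith) hATpos) hed
  set W := A * (2 * l * E / Real.exp d) / B t with hWdef
  have hlE : (0:ℝ) < 2 * l * E / Real.exp d :=
    div_pos (mul_pos (by linarith) hE0) hed
  have hW0 : 0 < W := by
    rw [hWdef]; exact div_pos (mul_pos hApos hlE) hBt
  have hMW : M ≤ W := by
    have h2 : M ≤ A * (2 * l * E / Real.exp d) := by
      rw [hMdef]
      have h3 : AT m ω l R K 1 * 1 ≤ A * E :=
        mul_le_mul hAge hE1 one_pos.le hApos.le
      have h4 : (0:ℝ) < 2 * l / Real.exp d := div_pos (by linarith) hed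
      calc 2 * l * AT m ω l R K 1 / Real.exp d
          = (2 * l / Real.exp d) * (AT m ω l R K 1 * 1) := by ring
        _ ≤ (2 * l / Real.exp d) * (A * E) := mul_le_mul_of_nonneg_left h3 h4.le
        _ = A * (2 * l * E / Real.exp d) := by ring
    have h1 : A * (2 * l * E / Real.exp d) ≤ W := by
      rw [hWdef, le_div_iff₀ hBt]
      have := mul_le_of_le_one_right (mul_pos hApos hlE).le hBt1.le
      linarith only [this]
    linarith only [h1, h2]
  -- w ≥ μ s
  have hMμ : m / (ω * R) * B0 < M := by
    rw [lt_div_iff₀ (mul_pos hed hμ)] at hB0small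
    rw [hMdef, lt_div_iff₀ hed]
    nlinarith only [hB0small]
  have hwμ : 0 ≤ A * phi l d ξ - m / (ω * R) * s := by
    have h1 : m / (ω * R) * s = (m / (ω * R) * B t) * ξ := by
      rw [hξdef]; field_simp
    have h2 : (m / (ω * R) * B t) * ξ ≤ (m / (ω * R) * B0) * ξ :=
      mul_le_mul_of_nonneg_right (mul_le_mul_of_nonneg_left hBtB0 hμ.le) hξ0.le
    have h3 : (m / (ω * R) * B0) * ξ ≤ M * ξ := mul_le_mul_of_nonneg_right hMμ.le hξ0.le
    have hMA : M ≤ A * (2 * l / Real.exp d) := by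
      rw [hMdef]
      calc 2 * l * AT m ω l R K 1 / Real.exp d
          = (2 * l / Real.exp d) * AT m ω l R K 1 := by ring
        _ ≤ (2 * l / Real.exp d) * A :=
            mul_le_mul_of_nonneg_left hAge (div_pos (by linarith) hed).le
        _ = A * (2 * l / Real.exp d) := by ring
    have h4 : M * ξ ≤ (A * (2 * l / Real.exp d)) * ξ :=
      mul_le_mul_of_nonneg_right hMA hξ0.le
    have h5 : A * (2 * l / Real.exp d * ξ) ≤ A * phi l d ξ :=
      mul_le_mul_of_nonneg_left hφlin hApos.le
    have h6 : (A * (2 * l / Real.exp d)) * ξ = A * (2 * l / Real.exp d * ξ) := by ring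
    linarith only [h1, h2, h3, h4, h5, h6.le, h6.ge]
  -- B' t ≤ 0
  have hB'le : B' t ≤ 0 := by
    have htend : Filter.Tendsto (slope B t) (nhdsWithin t (Set.Ioi t)) (nhds (B' t)) :=
      (hasDerivAt_iff_tendsto_slope.mp hBder).mono_left
        (nhdsWithin_mono _ (fun y hy => Set.mem_compl_singleton_iff.mpr (LT.lt.ne' hy)))
    refine le_of_tendsto htend ?_
    filter_upwards [Ioo_mem_nhdsGT_of_mem ⟨le_refl t, htT⟩] with τ hτ
    have hτI : τ ∈ Set.Ico (0:ℝ) T := ⟨by linarith [hτ.1], hτ.2⟩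
    have hBτ : B τ ≤ B t := hBanti htI hτI hτ.1.le
    rw [slope_def_field]
    exact div_nonpos_iff.mpr (Or.inr ⟨by linarith, by linarith [hτ.1]⟩)
  -- derivative of √(B ·)
  have hsq' : HasDerivAt (fun τ => Real.sqrt (B τ)) (B' t / (2 * u)) t := by
    have h2 : HasDerivAt (fun τ => Real.sqrt (B τ)) (1 / (2 * Real.sqrt (B t)) * B' t) t :=
      (Real.hasDerivAt_sqrt hBt.ne').comp t hBder
    rw [show B' t / (2 * u) = 1 / (2 * Real.sqrt (B t)) * B' t from by rw [← hudef]; ring]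
    exact h2
  -- derivative of the Af numerator
  have hGd : HasDerivAt (fun τ => K ^ 2 - 2 * bL l * K * Real.sqrt (B τ) + bL l ^ 2 * B τ)
      (bL l * (bL l * u - K) * B' t / u) t := by
    have h := ((hasDerivAt_const t (K ^ 2)).sub (hsq'.const_mul (2 * bL l * K))).add
      (hBder.const_mul (bL l ^ 2))
    rw [show bL l * (bL l * u - K) * B' t / u
        = 0 - 2 * bL l * K * (B' t / (2 * u)) + bL l ^ 2 * B' t from by
      field_simp; ring]
    exact h
  -- derivative of Nf
  have hNd : HasDerivAt (fun τ => Nf l R K 1 B τ)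
      (-((aL l + bL l) * (K - bL l * u) * B' t / u)) t := by
    have h := (hasDerivAt_const t (K ^ 2 + aL l * R ^ (1:ℕ))).sub
      (((hsq'.const_mul (2 * K)).sub (hBder.const_mul (bL l))).const_mul (aL l + bL l))
    simp only [Nf]
    rw [show -((aL l + bL l) * (K - bL l * u) * B' t / u)
        = 0 - (aL l + bL l) * (2 * K * (B' t / (2 * u)) - bL l * B' t) from by
      field_simp; ring]
    exact h
  -- derivative of Af
  set vA := (m / ω) * ((K - bL l * u) * (aL l * (K ^ 2 - bL l * R)) * B' t)
      / (u * Nf l R K 1 B t ^ 2) with hvAdef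
  have hNe : Nf l R K 1 B t
      = K ^ 2 + aL l * R - (aL l + bL l) * (2 * K * u - bL l * u ^ 2) := by
    simp only [Nf, pow_one, ← hudef]
    rw [← hu2]
  have hNe' : K ^ 2 + aL l * R - (aL l + bL l) * (2 * K * u - bL l * u ^ 2) ≠ 0 := by
    rw [← hNe]; exact hNpos.ne'
  have hAfd : HasDerivAt (fun τ => Af m ω l R K 1 B τ) vA t := by
    have h := (hGd.const_mul (m / ω)).div hNd hNpos.ne'
    have hval : vA
        = ((m / ω) * (bL l * (bL l * u - K) * B' t / u) * Nf l R K 1 B t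
            - (m / ω) * (K ^ 2 - 2 * bL l * K * u + bL l ^ 2 * B t)
              * (-((aL l + bL l) * (K - bL l * u) * B' t / u)))
          / Nf l R K 1 B t ^ 2 := by
      rw [hvAdef, hNe, ← hu2]
      field_simp
      ring
    rw [hval]
    simp only [Af]
    exact h
  have hvA : vA ≤ 0 := by
    rw [hvAdef]
    refine div_nonpos_iff.mpr (Or.inr ⟨?_, mul_nonneg hu0.le (sq_nonneg _)⟩)
    refine mul_nonpos_iff.mpr (Or.inl ⟨hmω.le, ?_⟩)
    refine mul_nonpos_iff.mpr (Or.inl ⟨?_, hB'le⟩)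
    exact mul_nonneg hKbu (mul_nonneg ha0 (by linarith))
  -- derivative of the phi part in time
  have hstd : HasDerivAt (fun τ => s / B τ) (-(s * B' t) / B t ^ 2) t := by
    have h := (hasDerivAt_const t s).div hBder hBt.ne'
    rw [show -(s * B' t) / B t ^ 2 = (0 * B t - s * B' t) / B t ^ 2 from by ring]
    exact h
  have hφtd : HasDerivAt (fun τ => phi l d (s / B τ))
      (2 * l * E / Real.exp d * (-(s * B' t) / B t ^ 2)) t := by
    have h := (((hstd.const_mul d).exp).sub_const 1).const_mul (2 * l / (d * Real.exp d))
    have heq : (fun τ => phi l d (s / B τ)) =ᶠ[nhds t]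
        (fun τ => 2 * l / (d * Real.exp d) * (Real.exp (d * (s / B τ)) - 1)) := by
      filter_upwards [hBder.continuousAt.eventually (eventually_gt_nhds hsB)] with τ hτ
      rw [phi, if_pos ((div_lt_one (hs0.trans hτ)).mpr hτ)]
    have h2 := h.congr_of_eventuallyEq heq
    rw [show 2 * l * E / Real.exp d * (-(s * B' t) / B t ^ 2)
        = 2 * l / (d * Real.exp d)
            * (Real.exp (d * (s / B t)) * (d * (-(s * B' t) / B t ^ 2))) from by
      rw [hEdef, hξdef]; field_simp]
    exact h2
  -- time derivative of w(s,·)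
  have hwt : deriv (fun τ => Af m ω l R K 1 B τ * phi l d (s / B τ)) t
      = vA * phi l d ξ
        + A * (2 * l * E / Real.exp d * (-(s * B' t) / B t ^ 2)) := by
    exact (hAfd.mul hφtd).deriv
  -- space derivatives
  have hgd : ∀ x : ℝ, HasDerivAt
      (fun σ => A * (2 * l / (d * Real.exp d) * (Real.exp (d * (σ / B t)) - 1)))
      (A * (2 * l / (d * Real.exp d) * (Real.exp (d * (x / B t)) * (d * (1 / B t))))) x := by
    intro x
    exact (((((hasDerivAt_id x).div_const (B t)).const_mul d).exp.sub_const 1).const_mul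
      (2 * l / (d * Real.exp d))).const_mul A
  have hfeq : (fun σ => A * phi l d (σ / B t)) =ᶠ[nhds s]
      (fun σ => A * (2 * l / (d * Real.exp d) * (Real.exp (d * (σ / B t)) - 1))) := by
    filter_upwards [Iio_mem_nhds hsB] with σ hσ
    rw [phi, if_pos ((div_lt_one hBt).mpr hσ)]
  have hws : deriv (fun σ => A * phi l d (σ / B t)) s = W := by
    rw [hfeq.deriv_eq, (hgd s).deriv, hWdef, hEdef, hξdef]
    field_simp
  have hdg : deriv (fun σ => A * (2 * l / (d * Real.exp d) * (Real.exp (d * (σ / B t)) - 1)))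
      = fun x => A * (2 * l / (d * Real.exp d)) * (d * (1 / B t)) * Real.exp (d * (x / B t)) := by
    funext x
    rw [(hgd x).deriv]
    ring
  have hwss : deriv (deriv (fun σ => A * phi l d (σ / B t))) s = d * W / B t := by
    have h1 := hfeq.deriv
    rw [h1.deriv_eq, hdg]
    have h2 : HasDerivAt
        (fun x : ℝ => A * (2 * l / (d * Real.exp d)) * (d * (1 / B t)) * Real.exp (d * (x / B t)))
        (A * (2 * l / (d * Real.exp d)) * (d * (1 / B t))
          * (Real.exp (d * (s / B t)) * (d * (1 / B t)))) s :=
      ((((hasDerivAt_id s).div_const (B t)).const_mul d).exp).const_mul _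
    rw [h2.deriv, hWdef, hEdef, hξdef]
    field_simp
  -- put everything together
  rw [hwt, hws, hwss]
  have hsqrtW : Real.sqrt (W ^ 2 + (d * W / B t) ^ 2) = W * Real.sqrt (B t ^ 2 + d ^ 2) / B t := by
    rw [show W ^ 2 + (d * W / B t) ^ 2 = (W / B t) ^ 2 * (B t ^ 2 + d ^ 2) from by
        field_simp,
      Real.sqrt_mul (sq_nonneg _), Real.sqrt_sq (div_nonneg hW0.le hBt.le)]
    ring
  have hsp : 0 < Real.sqrt (B t ^ 2 + d ^ 2) :=
    Real.sqrt_pos.mpr (add_pos (pow_pos hBt 2) (pow_pos hd0 2))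
  have hT2eq : W ^ p * (d * W / B t) / Real.sqrt (W ^ 2 + (d * W / B t) ^ 2)
      = d * W ^ p / Real.sqrt (B t ^ 2 + d ^ 2) := by
    rw [hsqrtW]
    field_simp
  have hsd : 0 < Real.sqrt (d ^ 2 + 1) := Real.sqrt_pos.mpr (by positivity)
  have hterm1 : vA * phi l d ξ + A * (2 * l * E / Real.exp d * (-(s * B' t) / B t ^ 2))
      ≤ d * W ^ p / Real.sqrt (d ^ 2 + 1) := by
    have e1 : A * (2 * l * E / Real.exp d * (-(s * B' t) / B t ^ 2)) = W * ξ * (-B' t) := by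
      rw [hWdef, hξdef]
      field_simp
    have hc0 : 0 ≤ d / Real.sqrt (d ^ 2 + 1) * M ^ (p - 1) :=
      mul_nonneg (div_nonneg hd0.le (Real.sqrt_nonneg _)) (Real.rpow_nonneg hM0.le _)
    have e2 : W * ξ * (-B' t) ≤ W * ξ * (d / Real.sqrt (d ^ 2 + 1) * M ^ (p - 1)) := by
      refine mul_le_mul_of_nonneg_left ?_ (mul_nonneg hW0.le hξ0.le)
      have hb := hB' t ⟨ht0, htT⟩
      rw [hMdef]
      linarith [hb]
    have e3 : W * ξ * (d / Real.sqrt (d ^ 2 + 1) * M ^ (p - 1))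
        ≤ W * 1 * (d / Real.sqrt (d ^ 2 + 1) * M ^ (p - 1)) :=
      mul_le_mul_of_nonneg_right (mul_le_mul_of_nonneg_left hξ1.le hW0.le) hc0
    have hMp : M ^ (p - 1) ≤ W ^ (p - 1) := Real.rpow_le_rpow hM0.le hMW (by linarith)
    have hWp : W ^ p = W * W ^ (p - 1) := by
      nth_rewrite 1 [show p = 1 + (p - 1) by ring]
      rw [Real.rpow_add hW0, Real.rpow_one]
    have e4 : W * 1 * (d / Real.sqrt (d ^ 2 + 1) * M ^ (p - 1))
        ≤ d * W ^ p / Real.sqrt (d ^ 2 + 1) := by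
      calc W * 1 * (d / Real.sqrt (d ^ 2 + 1) * M ^ (p - 1))
          = d / Real.sqrt (d ^ 2 + 1) * (W * M ^ (p - 1)) := by ring
        _ ≤ d / Real.sqrt (d ^ 2 + 1) * (W * W ^ (p - 1)) := by
            refine mul_le_mul_of_nonneg_left ?_ (div_nonneg hd0.le (Real.sqrt_nonneg _))
            exact mul_le_mul_of_nonneg_left hMp hW0.le
        _ = d * W ^ p / Real.sqrt (d ^ 2 + 1) := by rw [hWp]; ring
    have hφvA : vA * phi l d ξ ≤ 0 := mul_nonpos_iff.mpr (Or.inr ⟨hvA, hφ0⟩)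
    rw [e1]
    linarith only [e2, e3, e4, hφvA]
  have hT2ge : d * W ^ p / Real.sqrt (d ^ 2 + 1) ≤ d * W ^ p / Real.sqrt (B t ^ 2 + d ^ 2) := by
    have h1 : Real.sqrt (B t ^ 2 + d ^ 2) ≤ Real.sqrt (d ^ 2 + 1) :=
      Real.sqrt_le_sqrt (by nlinarith only [hBt, hBt1])
    have h3 : 0 ≤ d * W ^ p := mul_nonneg hd0.le (Real.rpow_nonneg hW0.le _)
    rw [div_le_div_iff₀ hsd hsp]
    exact mul_le_mul_of_nonneg_left h1 h3
  have hT3 : 0 ≤ χ * ((A * phi l d ξ - m / (ω * R) * s) * W ^ q)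
      / Real.sqrt (1 + (A * phi l d ξ - m / (ω * R) * s) ^ 2) :=
    div_nonneg (mul_nonneg hχ.le (mul_nonneg hwμ (Real.rpow_nonneg hW0.le q)))
      (Real.sqrt_nonneg _)
  rw [hT2eq]
  linarith only [hterm1, hT2ge, hT3]
end

section
/- Let n ≥ 2, χ > 0, p, q ≥ 1 with p ≤ q, m > 0, λ ∈ [1/3,1], K > 0 with K ≥ √(b_λ Rⁿ), and let B₀ ∈ (0,1) satisfy K√B₀ ≤ Rⁿ, B₀ ≤ K²/(4(a_λ + b_λ)²), B₀ < 2λn A_T/(e^d μ), and B₀^{2−2/n} ≤ (2λ A_T/e^d − (μ/n)B₀)², where μ := mn/(ω_n Rⁿ). If for some T > 0 the function B ∈ C¹([0,T)) is positive and nonincreasing with B(0) ≤ B₀ and B′(t) ≥ −(n^q χ/√2)·(2λ A_T/e^d)^{q−1}·B(t)^{1−1/n} for all t ∈ (0,T), then (𝒫 w_in)(s,t) ≤ 0 for all t ∈ (0,T) and all s ∈ (0,B(t)). -/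
set_option maxHeartbeats 1000000


open Real Set

/-- Very inner region, `n ≥ 2`: under the stated conditions on `B`,
`(𝒫 w_in)(s,t) ≤ 0` for all `t ∈ (0,T)` and `s ∈ (0,B(t))`. -/
theorem stmt12 (n : ℕ) (hn : 2 ≤ n) (R χ p q m l K T d B0 : ℝ) (hR : 0 < R) (hχ : 0 < χ)
    (hp : 1 ≤ p) (hq : 1 ≤ q) (hpq : p ≤ q) (hm : 0 < m)
    (hl : l ∈ Set.Icc (1/3 : ℝ) 1) (hK : 0 < K) (hKb : Real.sqrt (bL l * R ^ n) ≤ K)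
    (hT : 0 < T)
    (hd : d ∈ Set.Ioo (1 : ℝ) 2) (hde : (2 - d) * Real.exp d - 2 = 0)
    (hB0 : B0 ∈ Set.Ioo (0 : ℝ) 1) (hB0R : K * Real.sqrt B0 ≤ R ^ n)
    (hB0le : B0 ≤ K ^ 2 / (4 * (aL l + bL l) ^ 2))
    (hB0small : B0 < 2 * l * (n : ℝ) * AT m (omegaN n) l R K n
        / (Real.exp d * ((m * n) / (omegaN n * R ^ n))))
    (hB0sq : B0 ^ (2 - 2 / (n : ℝ))
        ≤ (2 * l * AT m (omegaN n) l R K n / Real.exp d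
            - (((m * n) / (omegaN n * R ^ n)) / (n : ℝ)) * B0) ^ 2)
    (B B' : ℝ → ℝ)
    (hB : ∀ t ∈ Set.Ico (0 : ℝ) T, HasDerivAt B (B' t) t)
    (hB'c : ContinuousOn B' (Set.Ico 0 T))
    (hBpos : ∀ t ∈ Set.Ico (0 : ℝ) T, 0 < B t)
    (hBanti : AntitoneOn B (Set.Ico 0 T))
    (hBinit : B 0 ≤ B0)
    (hB' : ∀ t ∈ Set.Ioo (0 : ℝ) T,
      B' t ≥ -((n : ℝ) ^ q * χ / Real.sqrt 2)
        * (2 * l * AT m (omegaN n) l R K n / Real.exp d) ^ (q - 1)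
        * (B t) ^ (1 - 1 / (n : ℝ))) :
    ∀ t ∈ Set.Ioo (0 : ℝ) T, ∀ s ∈ Set.Ioo (0 : ℝ) (B t),
      Pop n χ p q ((m * n) / (omegaN n * R ^ n))
        (fun σ τ => Af m (omegaN n) l R K n B τ * phi l d (σ / B τ)) s t ≤ 0 := by
  intro t ht s hs
  obtain ⟨ht0, htT⟩ := ht
  obtain ⟨hs0, hsB⟩ := hs
  have htmem : t ∈ Set.Ico (0:ℝ) T := ⟨ht0.le, htT⟩
  set ω := omegaN n with hω_def
  set μ := m * (n:ℝ) / (ω * R ^ n) with hμ_def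
  -- basic positivity facts
  have hn2 : (2:ℝ) ≤ (n:ℝ) := by exact_mod_cast hn
  have hnpos : (0:ℝ) < (n:ℝ) := by linarith only [hn2]
  have hωpos : 0 < ω := by
    have h1 : 0 < (MeasureTheory.volume (Metric.ball (0 : EuclideanSpace ℝ (Fin n)) 1)).toReal :=
      ENNReal.toReal_pos (Metric.measure_ball_pos _ _ one_pos).ne'
        MeasureTheory.measure_ball_lt_top.ne
    rw [hω_def]
    unfold omegaN
    exact mul_pos hnpos h1
  have hRn : (0:ℝ) < R ^ n := pow_pos hR n
  have hμpos : 0 < μ := by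
    rw [hμ_def]; exact div_pos (mul_pos hm hnpos) (mul_pos hωpos hRn)
  have hl3 : (1:ℝ)/3 ≤ l := hl.1
  have hl1 : l ≤ 1 := hl.2
  have hlpos : (0:ℝ) < l := by linarith only [hl3]
  have ha : 0 ≤ aL l := div_nonneg (sq_nonneg _) (by linarith only [hlpos])
  have hb0 : 0 ≤ bL l := by
    rw [bL]; apply div_nonneg <;> linarith only [hl3, hlpos]
  have hab : aL l + bL l = (1+l)/2 := by rw [aL, bL]; field_simp; ring
  have habpos : 0 < aL l + bL l := by rw [hab]; linarith only [hlpos]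
  have hd1 : (1:ℝ) < d := hd.1
  have hdpos : (0:ℝ) < d := by linarith only [hd1]
  have hed : (0:ℝ) < Real.exp d := Real.exp_pos d
  -- B facts
  have hB0pos : 0 < B0 := hB0.1
  have hBt : 0 < B t := hBpos t htmem
  have hBtB0 : B t ≤ B0 := (hBanti ⟨le_refl 0, hT⟩ htmem ht0.le).trans hBinit
  have hBt1 : B t < 1 := lt_of_le_of_lt hBtB0 hB0.2
  have hξpos : 0 < s/B t := div_pos hs0 hBt
  have hξ1 : s/B t < 1 := (div_lt_one hBt).2 hsB
  -- sqrt facts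
  set y := Real.sqrt (B t) with hy_def
  have hy2 : y ^ 2 = B t := Real.sq_sqrt hBt.le
  have hypos : 0 < y := Real.sqrt_pos.2 hBt
  have hyB0 : y ≤ Real.sqrt B0 := Real.sqrt_le_sqrt hBtB0
  have hsB0 : Real.sqrt B0 ≤ K / (2*(aL l + bL l)) := by
    have h2 : B0 ≤ (K / (2*(aL l + bL l)))^2 := by
      calc B0 ≤ K ^ 2 / (4 * (aL l + bL l) ^ 2) := hB0le
        _ = (K / (2*(aL l + bL l)))^2 := by rw [div_pow]; ring_nf
    calc Real.sqrt B0 ≤ Real.sqrt ((K / (2*(aL l + bL l)))^2) := Real.sqrt_le_sqrt h2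
      _ = K / (2*(aL l + bL l)) := Real.sqrt_sq (div_nonneg hK.le (by linarith only [habpos]))
  have hyK : y ≤ K / (2*(aL l + bL l)) := hyB0.trans hsB0
  have hby : bL l * y ≤ K / 2 := by
    have h1 : bL l * y ≤ (aL l + bL l) * (K / (2*(aL l + bL l))) :=
      mul_le_mul (by linarith only [ha]) hyK hypos.le habpos.le
    calc bL l * y ≤ (aL l + bL l) * (K / (2*(aL l + bL l))) := h1
      _ = K/2 := by field_simp
  have hbRn : bL l * R ^ n ≤ K ^ 2 := by
    have h1 := Real.sq_sqrt (mul_nonneg hb0 hRn.le)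
    calc bL l * R^n = Real.sqrt (bL l * R^n)^2 := h1.symm
      _ ≤ K^2 := pow_le_pow_left₀ (Real.sqrt_nonneg _) hKb 2
  -- N positivity
  have hNval : Nf l R K n B t = K^2 + aL l * R^n - (aL l + bL l)*(2*K*y - bL l * B t) := by
    simp only [Nf, hy_def]
  have hNpos : 0 < Nf l R K n B t := by
    rw [hNval]
    have h0 : 2*K*(aL l + bL l)*y ≤ 2*K*(aL l + bL l)*(K/(2*(aL l + bL l))) :=
      mul_le_mul_of_nonneg_left hyK (by positivity)
    have h0' : 2*K*(aL l + bL l)*(K/(2*(aL l + bL l))) = K^2 := by field_simp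
    have h1 : (aL l + bL l) * (2*K*y) ≤ K^2 := by rw [h0'] at h0; linarith only [h0]
    have h2 : 0 < aL l * R^n + (aL l + bL l)*(bL l * B t) := by
      rcases eq_or_lt_of_le hl1 with h | h
      · have hb1 : bL l = 1 := by rw [bL, h]; norm_num
        have e1 : 0 ≤ aL l*R^n := mul_nonneg ha hRn.le
        have e2 : 0 < (aL l + bL l)*(bL l * B t) := by
          rw [hb1]; apply mul_pos (by linarith only [ha]) (by linarith only [hBt])
        linarith only [e1, e2]
      · have ha' : 0 < aL l := by
          rw [aL]; exact div_pos (pow_pos (by linarith only [h]) 2) (by linarith only [hlpos])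
        have e1 : 0 < aL l*R^n := mul_pos ha' hRn
        have e2 : 0 ≤ (aL l + bL l)*(bL l * B t) :=
          mul_nonneg habpos.le (mul_nonneg hb0 hBt.le)
        linarith only [e1, e2]
    have h3 : (aL l + bL l)*(2*K*y - bL l*B t)
        = (aL l + bL l)*(2*K*y) - (aL l + bL l)*(bL l*B t) := by ring
    linarith only [h1, h2, h3]
  have hNne : Nf l R K n B t ≠ 0 := hNpos.ne'
  -- A positivity and lower bound
  have hnum_eq : Af m ω l R K n B t = m/ω * (K^2 - 2*bL l*K*y + bL l^2 * B t) / Nf l R K n B t := by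
    simp only [Af, hy_def]
  have hKby : 0 < K - bL l * y := by linarith only [hby, hK]
  have hnumpos : 0 < K^2 - 2*bL l*K*y + bL l^2*(B t) := by nlinarith only [hy2, mul_pos hKby hKby]
  have hApos : 0 < Af m ω l R K n B t := by
    rw [hnum_eq]; exact div_pos (mul_pos (div_pos hm hωpos) (by nlinarith only [hnumpos])) hNpos
  have hKRn : 0 < K^2 + aL l * R^n := by nlinarith only [mul_nonneg ha hRn.le, pow_pos hK 2]
  have hATval : AT m ω l R K n = m/ω * K^2/(K^2 + aL l * R^n) := by
    simp only [AT]
    have h2 : (0:ℝ) < 1 + aL l*R^n/K^2 := by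
      have h9 := div_nonneg (mul_nonneg ha hRn.le) (sq_nonneg K)
      linarith only [h9]
    field_simp
  have hATpos : 0 < AT m ω l R K n := by
    rw [hATval]; exact div_pos (mul_pos (div_pos hm hωpos) (pow_pos hK 2)) hKRn
  have hAT_le_A : AT m ω l R K n ≤ Af m ω l R K n B t := by
    rw [hATval, hnum_eq, div_le_div_iff₀ hKRn hNpos, hNval]
    have hkey : m/ω*(K^2 - 2*bL l*K*y + bL l^2*(B t))*(K^2 + aL l*R^n)
        - m/ω*K^2*(K^2 + aL l*R^n - (aL l + bL l)*(2*K*y - bL l*(B t)))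
        = m/ω*(aL l*(K^2 - bL l*R^n)*(2*K*y - bL l*y^2)) := by
      rw [← hy2]; ring
    have h5 : 0 ≤ m/ω*(aL l*(K^2 - bL l*R^n)*(2*K*y - bL l*y^2)) := by
      apply mul_nonneg (div_pos hm hωpos).le
      apply mul_nonneg (mul_nonneg ha (by linarith only [hbRn]))
      nlinarith only [mul_nonneg hypos.le (show (0:ℝ) ≤ 2*K - bL l*y by linarith only [hby, hK])]
    linarith only [hkey, h5]
  -- G and C
  set G := 2 * l * AT m ω l R K n / Real.exp d with hG_def
  have hGpos : 0 < G := by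
    rw [hG_def]; exact div_pos (mul_pos (mul_pos two_pos hlpos) hATpos) hed
  set C := G - μ/(n:ℝ)*B t with hC_def
  have hC0' : 0 < G - μ/(n:ℝ)*B0 := by
    have h1 : B0 * (Real.exp d * μ) < 2*l*(n:ℝ)*AT m ω l R K n := by
      have h2 := hB0small
      rwa [lt_div_iff₀ (mul_pos hed hμpos)] at h2
    have h3 : μ/(n:ℝ)*B0*Real.exp d < 2*l*AT m ω l R K n := by
      rw [div_mul_eq_mul_div, div_mul_eq_mul_div, div_lt_iff₀ hnpos]
      nlinarith only [h1, hnpos]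
    have h4 : μ/(n:ℝ)*B0 < G := by
      rw [hG_def, lt_div_iff₀ hed]
      linarith only [h3]
    linarith only [h4]
  have hCpos : 0 < C := by
    rw [hC_def]
    have h6 : μ/(n:ℝ)*B t ≤ μ/(n:ℝ)*B0 :=
      mul_le_mul_of_nonneg_left hBtB0 (div_nonneg hμpos.le hnpos.le)
    linarith only [hC0', h6]
  have h2n : (0:ℝ) ≤ 2 - 2/(n:ℝ) := by
    have h9 : 2/(n:ℝ) ≤ 1 := by rw [div_le_one hnpos]; linarith only [hn2]
    linarith only [h9]
  have hCge : (B t)^(1-1/(n:ℝ)) ≤ C := by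
    have h1 : (B t)^(2-2/(n:ℝ)) ≤ B0^(2-2/(n:ℝ)) := Real.rpow_le_rpow hBt.le hBtB0 h2n
    have h2 : B0^(2-2/(n:ℝ)) ≤ (G - μ/(n:ℝ)*B0)^2 := hB0sq
    have h3 : ((B t)^(1-1/(n:ℝ)))^2 = (B t)^(2-2/(n:ℝ)) := by
      rw [← Real.rpow_natCast ((B t)^(1-1/(n:ℝ))) 2, ← Real.rpow_mul hBt.le]
      congr 1
      push_cast
      ring
    have h4 : 0 ≤ (B t)^(1-1/(n:ℝ)) := Real.rpow_nonneg hBt.le _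
    have h7 : ((B t)^(1-1/(n:ℝ)))^2 ≤ (G - μ/(n:ℝ)*B0)^2 := by rw [h3]; exact h1.trans h2
    have h5 : (B t)^(1-1/(n:ℝ)) ≤ G - μ/(n:ℝ)*B0 := by
      have h8 := Real.sqrt_le_sqrt h7
      rwa [Real.sqrt_sq h4, Real.sqrt_sq hC0'.le] at h8
    have h6 : μ/(n:ℝ)*B t ≤ μ/(n:ℝ)*B0 :=
      mul_le_mul_of_nonneg_left hBtB0 (div_nonneg hμpos.le hnpos.le)
    rw [hC_def]; linarith only [h5, h6]
  -- B' facts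
  have hBder : HasDerivAt B (B' t) t := hB t htmem
  have hB'le : B' t ≤ 0 := by
    have h1 : Filter.Tendsto (slope B t) (nhdsWithin t (Set.Ioi t)) (nhds (B' t)) :=
      (hasDerivAt_iff_tendsto_slope.1 hBder).mono_left
        (nhdsWithin_mono t (fun x hx => Set.mem_compl_singleton_iff.2 (ne_of_gt hx)))
    apply le_of_tendsto h1
    filter_upwards [Ioo_mem_nhdsGT_of_mem ⟨le_refl t, htT⟩] with τ hτ
    rw [slope_def_field]
    apply div_nonpos_of_nonpos_of_nonneg
    · have h2 : B τ ≤ B t := hBanti htmem ⟨ht0.le.trans hτ.1.le, hτ.2⟩ hτ.1.le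
      linarith only [h2]
    · linarith only [hτ.1]
  have hmB' : -(B' t) ≤ (n:ℝ)^q*χ/Real.sqrt 2*G^(q-1)*(B t)^(1-1/(n:ℝ)) := by
    have h := hB' t ⟨ht0, htT⟩
    linarith only [h]
  -- spatial derivatives
  have hgD : ∀ x : ℝ, HasDerivAt
      (fun σ => Af m ω l R K n B t * (2*l/(d*Real.exp d)*(Real.exp (d*(σ/B t)) - 1)))
      (Af m ω l R K n B t * (2*l*Real.exp (d*(x/B t) - d))/B t) x := by
    intro x
    have h0 : HasDerivAt (fun σ : ℝ => d*(σ/B t)) (d*(1/B t)) x :=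
      ((hasDerivAt_id x).div_const (B t)).const_mul d
    have h1 := ((h0.exp).sub_const 1).const_mul (2*l/(d*Real.exp d))
    have h2 := h1.const_mul (Af m ω l R K n B t)
    refine h2.congr_deriv ?_
    rw [Real.exp_sub]
    field_simp
  have hfg : (fun σ => Af m ω l R K n B t * phi l d (σ / B t)) =ᶠ[nhds s]
      (fun σ => Af m ω l R K n B t * (2*l/(d*Real.exp d)*(Real.exp (d*(σ/B t)) - 1))) := by
    filter_upwards [Iio_mem_nhds hsB] with σ hσ
    have h1 : σ/B t < 1 := (div_lt_one hBt).2 hσ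
    simp only [phi]; rw [if_pos h1]
  have hws : deriv (fun σ => Af m ω l R K n B t * phi l d (σ / B t)) s
      = Af m ω l R K n B t * (2*l*Real.exp (d*(s/B t) - d))/B t := by
    rw [hfg.deriv_eq]; exact (hgD s).deriv
  have hfg' : deriv (fun σ => Af m ω l R K n B t * phi l d (σ / B t)) =ᶠ[nhds s]
      (fun x => Af m ω l R K n B t * (2*l*Real.exp (d*(x/B t) - d))/B t) := by
    filter_upwards [Iio_mem_nhds hsB] with σ hσ
    have hfgσ : (fun σ' => Af m ω l R K n B t * phi l d (σ' / B t)) =ᶠ[nhds σ]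
        (fun σ' => Af m ω l R K n B t * (2*l/(d*Real.exp d)*(Real.exp (d*(σ'/B t)) - 1))) := by
      filter_upwards [Iio_mem_nhds hσ] with τ hτ
      have h1 : τ/B t < 1 := (div_lt_one hBt).2 hτ
      simp only [phi]; rw [if_pos h1]
    rw [hfgσ.deriv_eq]; exact (hgD σ).deriv
  have hg2D : HasDerivAt (fun x => Af m ω l R K n B t * (2*l*Real.exp (d*(x/B t) - d))/B t)
      (Af m ω l R K n B t * (2*l*(d*Real.exp (d*(s/B t) - d)))/(B t)^2) s := by
    have h0 : HasDerivAt (fun σ : ℝ => d*(σ/B t) - d) (d*(1/B t)) s :=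
      (((hasDerivAt_id s).div_const (B t)).const_mul d).sub_const d
    have h1 := ((h0.exp.const_mul (2*l)).const_mul (Af m ω l R K n B t)).div_const (B t)
    refine h1.congr_deriv ?_
    field_simp
  have hwss : deriv (deriv (fun σ => Af m ω l R K n B t * phi l d (σ / B t))) s
      = Af m ω l R K n B t * (2*l*(d*Real.exp (d*(s/B t) - d)))/(B t)^2 := by
    rw [hfg'.deriv_eq]; exact hg2D.deriv
  -- time derivative
  have hsqD : HasDerivAt (fun τ => Real.sqrt (B τ)) (B' t/(2*y)) t := by
    have h := hBder.sqrt hBt.ne'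
    rw [hy_def]
    convert h using 1
  have hnumD : HasDerivAt (fun τ => m/ω*(K^2 - 2*bL l*K*Real.sqrt (B τ) + bL l^2*(B τ)))
      (m/ω*(0 - 2*bL l*K*(B' t/(2*y)) + bL l^2*(B' t))) t :=
    (((hasDerivAt_const t (K^2)).sub (hsqD.const_mul (2*bL l*K))).add
      (hBder.const_mul (bL l^2))).const_mul (m/ω)
  have hdenD : HasDerivAt
      (fun τ => K^2 + aL l*R^n - (aL l + bL l)*(2*K*Real.sqrt (B τ) - bL l*(B τ)))
      (0 - (aL l + bL l)*(2*K*(B' t/(2*y)) - bL l*(B' t))) t :=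
    (hasDerivAt_const t (K^2 + aL l*R^n)).sub
      (((hsqD.const_mul (2*K)).sub (hBder.const_mul (bL l))).const_mul (aL l + bL l))
  have hden_ne : K^2 + aL l*R^n - (aL l + bL l)*(2*K*y - bL l*(B t)) ≠ 0 := by
    rw [← hNval]; exact hNne
  have hQD := hnumD.div hdenD hden_ne
  have hexpD : HasDerivAt (fun τ => 2*l/(d*Real.exp d)*(Real.exp (d*(s/B τ)) - 1))
      (2*l/(d*Real.exp d)*(Real.exp (d*(s/B t))*(d*((0*B t - s*(B' t))/(B t)^2)))) t := by
    have h0 : HasDerivAt (fun τ => s/B τ) ((0*B t - s*(B' t))/(B t)^2) t :=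
      (hasDerivAt_const t s).div hBder hBt.ne'
    exact (((h0.const_mul d).exp).sub_const 1).const_mul (2*l/(d*Real.exp d))
  have hGD := hQD.mul hexpD
  have hFev : (fun τ => Af m ω l R K n B τ * phi l d (s / B τ)) =ᶠ[nhds t]
      (fun τ => m/ω*(K^2 - 2*bL l*K*Real.sqrt (B τ) + bL l^2*(B τ))
        /(K^2 + aL l*R^n - (aL l + bL l)*(2*K*Real.sqrt (B τ) - bL l*(B τ)))
        *(2*l/(d*Real.exp d)*(Real.exp (d*(s/B τ)) - 1))) := by
    have hev := hBder.continuousAt.eventually (eventually_gt_nhds hsB)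
    filter_upwards [hev] with τ hτ
    have hτ0 : 0 < B τ := hs0.trans hτ
    have h1 : s/B τ < 1 := (div_lt_one hτ0).2 hτ
    simp only [Af, Nf, phi]
    rw [if_pos h1]
  have hFD : HasDerivAt (fun τ => Af m ω l R K n B τ * phi l d (s / B τ))
      (m/ω*(B' t/(2*y))*(2*(K - bL l*y))*(aL l*(K^2 - bL l*R^n))/Nf l R K n B t^2
        *(2*l/(d*Real.exp d)*(Real.exp (d*(s/B t)) - 1))
       + Af m ω l R K n B t*(2*l*Real.exp (d*(s/B t) - d))/B t*(s/B t)*(-(B' t))) t := by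
    have h := hGD.congr_of_eventuallyEq hFev
    refine h.congr_deriv ?_
    simp only [Af, Nf, ← hy_def, Pi.div_apply]
    rw [Real.exp_sub]
    have hden' : K^2 + aL l*R^n - (aL l + bL l)*(2*K*y - bL l*(y^2)) ≠ 0 := by
      rw [hy2]; exact hden_ne
    rw [← hy2]
    field_simp
    ring
  have hderivT := hFD.deriv
  have hphi : phi l d (s/B t) = 2*l/(d*Real.exp d)*(Real.exp (d*(s/B t)) - 1) := by
    simp only [phi]; rw [if_pos hξ1]
  -- rewrite the goal
  simp only [Pop]
  rw [hderivT, hws, hwss, hphi]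
  -- abbreviations
  set At := Af m ω l R K n B t with hAt_def
  set EX := Real.exp (d*(s/B t) - d) with hEX_def
  set E0 := Real.exp (d*(s/B t)) with hE0_def
  set P1 := At*(2*l*EX)/B t with hP1_def
  set P2 := At*(2*l*(d*EX))/(B t)^2 with hP2_def
  set Yv := At*(2*l/(d*Real.exp d)*(E0 - 1)) - μ/(n:ℝ)*s with hYv_def
  have hEXpos : 0 < EX := by rw [hEX_def]; exact Real.exp_pos _
  have hE0ge1 : 1 ≤ E0 := by
    rw [hE0_def]; exact Real.one_le_exp (mul_nonneg hdpos.le hξpos.le)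
  have hP1pos : 0 < P1 := by
    rw [hP1_def]
    exact div_pos (mul_pos hApos (mul_pos (mul_pos two_pos hlpos) hEXpos)) hBt
  have hP2pos : 0 < P2 := by
    rw [hP2_def]
    exact div_pos (mul_pos hApos (mul_pos (mul_pos two_pos hlpos) (mul_pos hdpos hEXpos)))
      (pow_pos hBt 2)
  have hq1 : (0:ℝ) ≤ q - 1 := by linarith only [hq]
  have hc2E : 0 ≤ 2*l/(d*Real.exp d)*(E0 - 1) := by
    apply mul_nonneg (div_nonneg (by linarith only [hlpos]) (mul_pos hdpos hed).le) (by linarith only [hE0ge1])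
  -- the time derivative is bounded
  have hS1 : m/ω*(B' t/(2*y))*(2*(K - bL l*y))*(aL l*(K^2 - bL l*R^n))/Nf l R K n B t^2
      *(2*l/(d*Real.exp d)*(E0 - 1)) ≤ 0 := by
    apply mul_nonpos_of_nonpos_of_nonneg _ hc2E
    apply div_nonpos_of_nonpos_of_nonneg _ (sq_nonneg _)
    have e1 : B' t/(2*y) ≤ 0 :=
      div_nonpos_of_nonpos_of_nonneg hB'le (by linarith only [hypos])
    have t1 : m/ω*(B' t/(2*y)) ≤ 0 := mul_nonpos_of_nonneg_of_nonpos (div_pos hm hωpos).le e1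
    have t2 : m/ω*(B' t/(2*y))*(2*(K - bL l*y)) ≤ 0 :=
      mul_nonpos_of_nonpos_of_nonneg t1 (by linarith only [hKby])
    exact mul_nonpos_of_nonpos_of_nonneg t2 (mul_nonneg ha (by linarith only [hbRn]))
  have hVle : m/ω*(B' t/(2*y))*(2*(K - bL l*y))*(aL l*(K^2 - bL l*R^n))/Nf l R K n B t^2
      *(2*l/(d*Real.exp d)*(E0 - 1)) + P1*(s/B t)*(-(B' t))
      ≤ P1*(s/B t)*((n:ℝ)^q*χ/Real.sqrt 2*G^(q-1)*(B t)^(1-1/(n:ℝ))) := by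
    have h2 : P1*(s/B t)*(-(B' t))
        ≤ P1*(s/B t)*((n:ℝ)^q*χ/Real.sqrt 2*G^(q-1)*(B t)^(1-1/(n:ℝ))) :=
      mul_le_mul_of_nonneg_left hmB' (mul_nonneg hP1pos.le hξpos.le)
    linarith only [hS1, h2]
  -- the diffusion term is nonnegative
  have hDiff : 0 ≤ (n:ℝ)^(p+1)*(s^(2-2/(n:ℝ))*P1^p*P2)
      /Real.sqrt (P1^2 + (n:ℝ)^2*s^(2-2/(n:ℝ))*P2^2) := by
    apply div_nonneg _ (Real.sqrt_nonneg _)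
    apply mul_nonneg (Real.rpow_nonneg hnpos.le _)
    exact mul_nonneg (mul_nonneg (Real.rpow_nonneg hs0.le _) (Real.rpow_nonneg hP1pos.le _))
      hP2pos.le
  -- chemotaxis term lower bound
  have hexp1 : 2*l/Real.exp d*(s/B t) ≤ 2*l/(d*Real.exp d)*(E0 - 1) := by
    rw [hE0_def]
    rw [div_mul_eq_mul_div, div_mul_eq_mul_div, div_le_div_iff₀ hed (mul_pos hdpos hed)]
    nlinarith only [mul_nonneg (mul_nonneg (show (0:ℝ) ≤ 2*l by linarith only [hlpos]) hed.le)
      (show (0:ℝ) ≤ Real.exp (d*(s/B t)) - 1 - d*(s/B t) by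
        linarith only [Real.add_one_le_exp (d*(s/B t))])]
  have hYlb : s/B t*C ≤ Yv := by
    have h5 : At*(2*l/Real.exp d*(s/B t)) ≤ At*(2*l/(d*Real.exp d)*(E0 - 1)) :=
      mul_le_mul_of_nonneg_left hexp1 hApos.le
    have h2 : AT m ω l R K n*(2*l/Real.exp d*(s/B t)) ≤ At*(2*l/Real.exp d*(s/B t)) :=
      mul_le_mul_of_nonneg_right hAT_le_A
        (mul_nonneg (div_nonneg (by linarith only [hlpos]) hed.le) hξpos.le)
    have h3 : AT m ω l R K n*(2*l/Real.exp d*(s/B t)) = G*(s/B t) := by rw [hG_def]; ring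
    have h4 : μ/(n:ℝ)*s = μ/(n:ℝ)*(B t)*(s/B t) := by field_simp
    rw [hYv_def, hC_def]
    nlinarith only [h5, h2, h3, h4]
  have hYpos : 0 < Yv := lt_of_lt_of_le (mul_pos hξpos hCpos) hYlb
  have hGd : G/(B t) ≤ P1 := by
    rw [hP1_def, hEX_def]
    have h1 : Real.exp (-d) ≤ Real.exp (d*(s/B t) - d) := by
      apply Real.exp_le_exp.2
      nlinarith only [mul_nonneg hdpos.le hξpos.le]
    have h2 : G = AT m ω l R K n*(2*l*Real.exp (-d)) := by
      rw [hG_def, Real.exp_neg]; ring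
    rw [h2]
    rw [div_le_div_iff₀ hBt hBt]
    have h3 : AT m ω l R K n*(2*l*Real.exp (-d)) ≤ At*(2*l*Real.exp (d*(s/B t) - d)) :=
      mul_le_mul hAT_le_A (mul_le_mul_of_nonneg_left h1 (by linarith only [hlpos]))
        (mul_nonneg (by linarith only [hlpos]) (Real.exp_pos _).le) hApos.le
    nlinarith only [h3, hBt]
  have hGP1 : G ≤ P1 := by
    have h1 : G ≤ G/(B t) := by
      rw [le_div_iff₀ hBt]
      nlinarith only [hGpos, hBt1]
    linarith only [hGd, h1]
  have hP1q : (G/(B t))^(q-1) ≤ P1^(q-1) :=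
    Real.rpow_le_rpow (div_pos hGpos hBt).le hGd hq1
  have hGBq : (G/(B t))^(q-1) = G^(q-1)/(B t)^(q-1) := Real.div_rpow hGpos.le hBt.le _
  have hP1split : P1^q = P1^(q-1)*P1 := by
    have h := Real.rpow_add hP1pos (q-1) 1
    rw [Real.rpow_one, sub_add_cancel] at h
    exact h
  have hsum : 0 < 1 + s^(2/(n:ℝ)-2)*Yv^2 := by
    have h9 := mul_nonneg (Real.rpow_nonneg hs0.le (2/(n:ℝ)-2)) (sq_nonneg Yv)
    linarith only [h9]
  have hnq : (0:ℝ) ≤ (n:ℝ)^q*χ := mul_nonneg (Real.rpow_nonneg hnpos.le q) hχ.le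
  have hnq2 : (0:ℝ) ≤ (n:ℝ)^q*χ/Real.sqrt 2 := div_nonneg hnq (Real.sqrt_nonneg 2)
  have hchemo : P1*(s/B t)*((n:ℝ)^q*χ/Real.sqrt 2*G^(q-1)*(B t)^(1-1/(n:ℝ)))
      ≤ (n:ℝ)^q*χ*(Yv*P1^q)/Real.sqrt (1 + s^(2/(n:ℝ)-2)*Yv^2) := by
    rcases le_total (s^(2/(n:ℝ)-2)*Yv^2) 1 with hX | hX
    · -- case X ≤ 1
      have hsq2 : Real.sqrt (1 + s^(2/(n:ℝ)-2)*Yv^2) ≤ Real.sqrt 2 :=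
        Real.sqrt_le_sqrt (by linarith only [hX])
      have hsqpos : 0 < Real.sqrt (1 + s^(2/(n:ℝ)-2)*Yv^2) := Real.sqrt_pos.2 hsum
      have core : G^(q-1)*(B t)^(1-1/(n:ℝ)) ≤ C*P1^(q-1) := by
        have k1 : (B t)^(q-1)*(B t)^(1-1/(n:ℝ)) ≤ C := by
          rw [← Real.rpow_add hBt]
          calc (B t)^(q-1+(1-1/(n:ℝ))) ≤ (B t)^(1-1/(n:ℝ)) :=
                Real.rpow_le_rpow_of_exponent_ge hBt hBt1.le (by linarith only [hq1])
            _ ≤ C := hCge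
        have k2 : G^(q-1)/(B t)^(q-1) ≤ P1^(q-1) := by rw [← hGBq]; exact hP1q
        have hBq_pos : 0 < (B t)^(q-1) := Real.rpow_pos_of_pos hBt _
        calc G^(q-1)*(B t)^(1-1/(n:ℝ))
            = ((B t)^(q-1)*(B t)^(1-1/(n:ℝ)))*(G^(q-1)/(B t)^(q-1)) := by
              field_simp
          _ ≤ C*P1^(q-1) := mul_le_mul k1 k2
              (div_nonneg (Real.rpow_nonneg hGpos.le _) hBq_pos.le) hCpos.le
      have step1 : P1*(s/B t)*((n:ℝ)^q*χ/Real.sqrt 2*G^(q-1)*(B t)^(1-1/(n:ℝ)))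
          ≤ P1*(s/B t)*((n:ℝ)^q*χ/Real.sqrt 2*(C*P1^(q-1))) := by
        apply mul_le_mul_of_nonneg_left _ (mul_nonneg hP1pos.le hξpos.le)
        calc (n:ℝ)^q*χ/Real.sqrt 2*G^(q-1)*(B t)^(1-1/(n:ℝ))
            = (n:ℝ)^q*χ/Real.sqrt 2*(G^(q-1)*(B t)^(1-1/(n:ℝ))) := by ring
          _ ≤ (n:ℝ)^q*χ/Real.sqrt 2*(C*P1^(q-1)) := mul_le_mul_of_nonneg_left core hnq2
      have step2 : P1*(s/B t)*((n:ℝ)^q*χ/Real.sqrt 2*(C*P1^(q-1)))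
          = (n:ℝ)^q*χ*((s/B t*C)*P1^q)/Real.sqrt 2 := by
        rw [hP1split]; ring
      have step3 : (n:ℝ)^q*χ*((s/B t*C)*P1^q)/Real.sqrt 2
          ≤ (n:ℝ)^q*χ*(Yv*P1^q)/Real.sqrt (1 + s^(2/(n:ℝ)-2)*Yv^2) := by
        apply div_le_div₀
          (mul_nonneg hnq (mul_nonneg hYpos.le (Real.rpow_nonneg hP1pos.le q)))
          (mul_le_mul_of_nonneg_left
            (mul_le_mul_of_nonneg_right hYlb (Real.rpow_nonneg hP1pos.le q)) hnq)
          hsqpos hsq2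
      calc P1*(s/B t)*((n:ℝ)^q*χ/Real.sqrt 2*G^(q-1)*(B t)^(1-1/(n:ℝ)))
          ≤ P1*(s/B t)*((n:ℝ)^q*χ/Real.sqrt 2*(C*P1^(q-1))) := step1
        _ = (n:ℝ)^q*χ*((s/B t*C)*P1^q)/Real.sqrt 2 := step2
        _ ≤ _ := step3
    · -- case X ≥ 1
      have hsqpos : 0 < Real.sqrt (1 + s^(2/(n:ℝ)-2)*Yv^2) := Real.sqrt_pos.2 hsum
      have hYv2 : Real.sqrt (1 + s^(2/(n:ℝ)-2)*Yv^2) ≤ Real.sqrt 2*(s^(1/(n:ℝ)-1)*Yv) := by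
        have h1 : Real.sqrt (1 + s^(2/(n:ℝ)-2)*Yv^2)
            ≤ Real.sqrt (2*(s^(2/(n:ℝ)-2)*Yv^2)) := Real.sqrt_le_sqrt (by linarith only [hX])
        have h2 : Real.sqrt (2*(s^(2/(n:ℝ)-2)*Yv^2))
            = Real.sqrt 2*Real.sqrt (s^(2/(n:ℝ)-2)*Yv^2) := Real.sqrt_mul (by norm_num) _
        have h3 : Real.sqrt (s^(2/(n:ℝ)-2)*Yv^2) = s^(1/(n:ℝ)-1)*Yv := by
          rw [Real.sqrt_mul (Real.rpow_nonneg hs0.le _), Real.sqrt_sq hYpos.le]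
          congr 1
          have h4 : s^((2:ℝ)/(n:ℝ)-2) = (s^((1:ℝ)/(n:ℝ)-1))^(2:ℕ) := by
            rw [← Real.rpow_natCast (s^((1:ℝ)/(n:ℝ)-1)) 2, ← Real.rpow_mul hs0.le]
            congr 1
            push_cast
            ring
          rw [h4, Real.sqrt_sq (Real.rpow_nonneg hs0.le _)]
        rw [h2, h3] at h1
        exact h1
      have hden2 : 0 < Real.sqrt 2*(s^(1/(n:ℝ)-1)*Yv) :=
        mul_pos (Real.sqrt_pos.2 two_pos) (mul_pos (Real.rpow_pos_of_pos hs0 _) hYpos)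
      have step3' : (n:ℝ)^q*χ*(Yv*P1^q)/(Real.sqrt 2*(s^(1/(n:ℝ)-1)*Yv))
          ≤ (n:ℝ)^q*χ*(Yv*P1^q)/Real.sqrt (1 + s^(2/(n:ℝ)-2)*Yv^2) := by
        apply div_le_div_of_nonneg_left
          (mul_nonneg hnq (mul_nonneg hYpos.le (Real.rpow_nonneg hP1pos.le q)))
          hsqpos hYv2
      have hseq : (n:ℝ)^q*χ*(Yv*P1^q)/(Real.sqrt 2*(s^(1/(n:ℝ)-1)*Yv))
          = (n:ℝ)^q*χ*(s^(1-1/(n:ℝ))*P1^q)/Real.sqrt 2 := by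
        have hsinv : s^((1:ℝ)-1/(n:ℝ)) = (s^((1:ℝ)/(n:ℝ)-1))⁻¹ := by
          rw [← Real.rpow_neg hs0.le]
          congr 1
          ring
        rw [hsinv]
        have hsne : s^((1:ℝ)/(n:ℝ)-1) ≠ 0 := (Real.rpow_pos_of_pos hs0 _).ne'
        field_simp
      have core2 : (s/B t)*(G^(q-1)*(B t)^(1-1/(n:ℝ))) ≤ s^(1-1/(n:ℝ))*P1^(q-1) := by
        have k1 : s/B t ≤ (s/B t)^((1:ℝ)-1/(n:ℝ)) := by
          have h0 : (1:ℝ)-1/(n:ℝ) ≤ 1 := by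
            have h9 : (0:ℝ) < 1/(n:ℝ) := by positivity
            linarith only [h9]
          have h := Real.rpow_le_rpow_of_exponent_ge hξpos hξ1.le h0
          rwa [Real.rpow_one] at h
        have k2 : G^(q-1) ≤ P1^(q-1) := Real.rpow_le_rpow hGpos.le hGP1 hq1
        have k3 : s^((1:ℝ)-1/(n:ℝ)) = (s/B t)^((1:ℝ)-1/(n:ℝ))*(B t)^((1:ℝ)-1/(n:ℝ)) := by
          rw [← Real.mul_rpow (div_pos hs0 hBt).le hBt.le]
          congr 1
          field_simp
        calc (s/B t)*(G^(q-1)*(B t)^(1-1/(n:ℝ)))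
            ≤ (s/B t)^((1:ℝ)-1/(n:ℝ))*(G^(q-1)*(B t)^(1-1/(n:ℝ))) :=
              mul_le_mul_of_nonneg_right k1
                (mul_nonneg (Real.rpow_nonneg hGpos.le _) (Real.rpow_nonneg hBt.le _))
          _ ≤ (s/B t)^((1:ℝ)-1/(n:ℝ))*(P1^(q-1)*(B t)^(1-1/(n:ℝ))) :=
              mul_le_mul_of_nonneg_left
                (mul_le_mul_of_nonneg_right k2 (Real.rpow_nonneg hBt.le _))
                (Real.rpow_nonneg hξpos.le _)
          _ = s^(1-1/(n:ℝ))*P1^(q-1) := by rw [k3]; ring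
      have step1' : P1*(s/B t)*((n:ℝ)^q*χ/Real.sqrt 2*G^(q-1)*(B t)^(1-1/(n:ℝ)))
          ≤ (n:ℝ)^q*χ*(s^(1-1/(n:ℝ))*P1^q)/Real.sqrt 2 := by
        have e1 : P1*(s/B t)*((n:ℝ)^q*χ/Real.sqrt 2*G^(q-1)*(B t)^(1-1/(n:ℝ)))
            = (n:ℝ)^q*χ/Real.sqrt 2*((s/B t)*(G^(q-1)*(B t)^(1-1/(n:ℝ))))*P1 := by ring
        have e2 : (n:ℝ)^q*χ*(s^(1-1/(n:ℝ))*P1^q)/Real.sqrt 2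
            = (n:ℝ)^q*χ/Real.sqrt 2*(s^(1-1/(n:ℝ))*P1^(q-1))*P1 := by
          rw [hP1split]; ring
        rw [e1, e2]
        apply mul_le_mul_of_nonneg_right _ hP1pos.le
        exact mul_le_mul_of_nonneg_left core2 hnq2
      calc P1*(s/B t)*((n:ℝ)^q*χ/Real.sqrt 2*G^(q-1)*(B t)^(1-1/(n:ℝ)))
          ≤ (n:ℝ)^q*χ*(s^(1-1/(n:ℝ))*P1^q)/Real.sqrt 2 := step1'
        _ = (n:ℝ)^q*χ*(Yv*P1^q)/(Real.sqrt 2*(s^(1/(n:ℝ)-1)*Yv)) := hseq.symm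
        _ ≤ _ := step3'
  linarith only [hVle, hDiff, hchemo]
end

section
/- Let n ∈ ℕ, m > 0, λ ∈ [1/3,1], K > 0 with K ≥ √(b_λ Rⁿ), δ ∈ (0,1), and let B₀ ∈ (0,1) satisfy K√B₀ < Rⁿ, B₀ ≤ K²/(4(a_λ + b_λ)²), and (μ/(n A_T))·max{B₀/λ, 2K√B₀} ≤ δ, where μ := mn/(ω_n Rⁿ). Suppose T > 0 and B ∈ C¹([0,T)) is positive with B(t) ≤ B₀ for all t ∈ (0,T). Then for all t ∈ (0,T) and all s ∈ (B(t), K√(B(t))), writing ξ := s/B(t), one has A(t)φ(ξ) − (μ/n)B(t)ξ ≥ (1−δ)A(t)φ(ξ). -/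
open Real Set

set_option maxHeartbeats 2000000 in
/-- Intermediate region:
`A(t)φ(ξ) − (μ/n)B(t)ξ ≥ (1−δ)A(t)φ(ξ)` with `ξ = s/B(t)`. -/
theorem stmt15 (n : ℕ) (hn : 0 < n) (R m l K T d δ B0 : ℝ) (hR : 0 < R) (hm : 0 < m)
    (hl : l ∈ Set.Icc (1/3 : ℝ) 1) (hK : 0 < K) (hKb : Real.sqrt (bL l * R ^ n) ≤ K)
    (hT : 0 < T) (hδ : δ ∈ Set.Ioo (0 : ℝ) 1)
    (hd : d ∈ Set.Ioo (1 : ℝ) 2) (hde : (2 - d) * Real.exp d - 2 = 0)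
    (hB0 : B0 ∈ Set.Ioo (0 : ℝ) 1) (hB0R : K * Real.sqrt B0 < R ^ n)
    (hB0le : B0 ≤ K ^ 2 / (4 * (aL l + bL l) ^ 2))
    (hB0δ : (((m * n) / (omegaN n * R ^ n)) / ((n : ℝ) * AT m (omegaN n) l R K n))
        * max (B0 / l) (2 * K * Real.sqrt B0) ≤ δ)
    (B B' : ℝ → ℝ)
    (hB : ∀ t ∈ Set.Ico (0 : ℝ) T, HasDerivAt B (B' t) t)
    (hB'c : ContinuousOn B' (Set.Ico 0 T))
    (hBpos : ∀ t ∈ Set.Ico (0 : ℝ) T, 0 < B t)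
    (hBle : ∀ t ∈ Set.Ioo (0 : ℝ) T, B t ≤ B0) :
    ∀ t ∈ Set.Ioo (0 : ℝ) T, ∀ s ∈ Set.Ioo (B t) (K * Real.sqrt (B t)),
      Af m (omegaN n) l R K n B t * phi l d (s / B t)
          - (((m * n) / (omegaN n * R ^ n)) / (n : ℝ)) * B t * (s / B t)
        ≥ (1 - δ) * (Af m (omegaN n) l R K n B t * phi l d (s / B t)) := by
  intro t ht s hs
  obtain ⟨ht0, htT⟩ := ht
  obtain ⟨hsB, hsK⟩ := hs
  have htI : t ∈ Set.Ico (0:ℝ) T := ⟨le_of_lt ht0, htT⟩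
  have hBt : 0 < B t := hBpos t htI
  have hBt0 : B t ≤ B0 := hBle t ⟨ht0, htT⟩
  have hl0 : (0:ℝ) < l := lt_of_lt_of_le (by norm_num) hl.1
  have hl1 : l ≤ 1 := hl.2
  have hl3 : (1/3:ℝ) ≤ l := hl.1
  have ha : 0 ≤ aL l := by unfold aL; positivity
  have hb0 : 0 ≤ bL l := by
    unfold bL; apply div_nonneg <;> linarith
  have hb1 : bL l ≤ 1 := by
    unfold bL; rw [div_le_one (by linarith)]; linarith
  have ha2 : aL l * (2*l) = (1-l)^2 := by unfold aL; field_simp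
  have hb2 : bL l * (2*l) = 3*l-1 := by unfold bL; field_simp
  have hab : aL l + bL l = (1 + l)/2 := by
    unfold aL bL; field_simp; ring
  have hRn : (0:ℝ) < R ^ n := pow_pos hR n
  have hω : 0 < omegaN n := by
    unfold omegaN
    apply mul_pos (by exact_mod_cast hn)
    exact ENNReal.toReal_pos (Metric.measure_ball_pos MeasureTheory.volume _ one_pos).ne'
      MeasureTheory.measure_ball_lt_top.ne
  set ω := omegaN n with hωdef
  set r := Real.sqrt (B t) with hrdef
  have hr0 : 0 < r := Real.sqrt_pos.mpr hBt
  have hr2 : r ^ 2 = B t := Real.sq_sqrt hBt.le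
  have hrK : r < K := by
    have h := lt_trans hsB hsK
    rw [← hr2, pow_two] at h
    exact lt_of_mul_lt_mul_right h hr0.le
  have hKb2 : bL l * R ^ n ≤ K ^ 2 := by
    calc bL l * R ^ n = Real.sqrt (bL l * R ^ n) ^ 2 :=
          (Real.sq_sqrt (mul_nonneg hb0 hRn.le)).symm
      _ ≤ K ^ 2 := pow_le_pow_left₀ (Real.sqrt_nonneg _) hKb 2
  -- bound on r from B0
  have habpos : (0:ℝ) < aL l + bL l := by rw [hab]; linarith
  have hsq_eq : K ^ 2 / (4 * (aL l + bL l) ^ 2) = (K / (2 * (aL l + bL l))) ^ 2 := by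
    rw [div_pow]; ring_nf
  have hr0' : r ≤ K / (2 * (aL l + bL l)) := by
    rw [hrdef]
    calc Real.sqrt (B t) ≤ Real.sqrt ((K / (2 * (aL l + bL l))) ^ 2) := by
          apply Real.sqrt_le_sqrt
          rw [← hsq_eq]
          exact le_trans hBt0 hB0le
      _ = K / (2 * (aL l + bL l)) := Real.sqrt_sq (by positivity)
  have hrK2 : 2 * (aL l + bL l) * r ≤ K := by
    rw [le_div_iff₀ (by positivity)] at hr0'
    linarith
  -- N positive
  have hN : 0 < Nf l R K n B t := by
    have hNe : Nf l R K n B t = K ^ 2 + aL l * R ^ n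
        - (aL l + bL l) * (2 * K * r - bL l * r ^ 2) := by
      unfold Nf; rw [← hrdef, hr2]
    rw [hNe]
    rcases eq_or_lt_of_le hl1 with h1 | h1
    · have ha0 : aL l = 0 := by rw [h1]; norm_num [aL]
      have hb0' : bL l = 1 := by rw [h1]; norm_num [bL]
      rw [ha0, hb0']
      have h2 : 0 < (K - r) ^ 2 := pow_pos (sub_pos.mpr hrK) 2
      have h3 : (K - r) ^ 2 = K ^ 2 - 2 * K * r + r ^ 2 := by ring
      linarith
    · have ha0 : 0 < aL l := by
        unfold aL
        exact div_pos (pow_pos (by linarith) 2) (by linarith)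
      have h2 := mul_le_mul_of_nonneg_left hrK2 hK.le
      linarith [mul_pos ha0 hRn,
        mul_nonneg (mul_nonneg habpos.le hb0) (sq_nonneg r), h2]
  set w := m / ω with hwdef
  have hw : 0 < w := div_pos hm hω
  have hAT : AT m ω l R K n = w * K ^ 2 / (K ^ 2 + aL l * R ^ n) := by
    unfold AT
    rw [hwdef]
    have h1 : K ^ 2 ≠ 0 := by positivity
    have h2 : K ^ 2 + aL l * R ^ n ≠ 0 := by positivity
    field_simp
  have hATpos : 0 < AT m ω l R K n := by rw [hAT]; positivity
  have hAf : Af m ω l R K n B t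
      = w * (K ^ 2 - 2 * bL l * K * r + bL l ^ 2 * r ^ 2) / Nf l R K n B t := by
    unfold Af; rw [← hrdef, ← hwdef, hr2]
  -- A(t) ≥ A_T
  have hAge : AT m ω l R K n ≤ Af m ω l R K n B t := by
    rw [hAT, hAf]
    rw [div_le_div_iff₀ (by positivity) hN]
    have hNe : Nf l R K n B t = K ^ 2 + aL l * R ^ n
        - (aL l + bL l) * (2 * K * r - bL l * r ^ 2) := by
      unfold Nf; rw [← hrdef, hr2]
    rw [hNe]
    have key : 0 ≤ (2 * K * r - bL l * r ^ 2) * aL l * (K ^ 2 - bL l * R ^ n) := by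
      apply mul_nonneg (mul_nonneg _ ha) (by linarith)
      have h2 := mul_le_mul_of_nonneg_right hb1 (sq_nonneg r)
      have h3 := mul_le_mul_of_nonneg_right hrK.le hr0.le
      have h4 := mul_nonneg hK.le hr0.le
      linarith
    have hexp : w * (K ^ 2 - 2 * bL l * K * r + bL l ^ 2 * r ^ 2) * (K ^ 2 + aL l * R ^ n)
        - w * K ^ 2 * (K ^ 2 + aL l * R ^ n - (aL l + bL l) * (2 * K * r - bL l * r ^ 2))
        = w * ((2 * K * r - bL l * r ^ 2) * aL l * (K ^ 2 - bL l * R ^ n)) := by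
      ring
    have h5 := mul_nonneg hw.le key
    linarith
  have hAfpos : 0 < Af m ω l R K n B t := lt_of_lt_of_le hATpos hAge
  -- xi facts
  set ξ := s / B t with hξdef
  have hξ1 : 1 < ξ := (one_lt_div hBt).mpr hsB
  have hξb : 0 < ξ - bL l := by linarith
  have hφ : phi l d ξ = 1 - aL l / (ξ - bL l) := by
    unfold phi; rw [if_neg (not_lt.mpr hξ1.le)]
  -- the mu constant
  have hμc : ((m * (n:ℝ)) / (ω * R ^ n)) / (n:ℝ) = m / (ω * R ^ n) := by
    have hn0 : (n:ℝ) ≠ 0 := Nat.cast_ne_zero.mpr hn.ne'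
    field_simp
  set μ' := m / (ω * R ^ n) with hμdef
  have hμpos : 0 < μ' := by positivity
  -- the hypothesis on δ rewritten
  have hXpos : 0 < ((m * (n:ℝ)) / (ω * R ^ n)) / ((n:ℝ) * AT m ω l R K n) := by
    have hn' : (0:ℝ) < n := Nat.cast_pos.mpr hn
    positivity
  have hX : ((m * (n:ℝ)) / (ω * R ^ n)) / ((n:ℝ) * AT m ω l R K n)
      = μ' / AT m ω l R K n := by
    have hn0 : (n:ℝ) ≠ 0 := Nat.cast_ne_zero.mpr hn.ne'
    rw [hμdef]
    field_simp
  have hδ1 : (μ' / AT m ω l R K n) * (B0 / l) ≤ δ := by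
    refine le_trans ?_ hB0δ
    rw [hX]
    exact mul_le_mul_of_nonneg_left (le_max_left _ _) (by rw [hX] at hXpos; exact hXpos.le)
  have hδ2 : (μ' / AT m ω l R K n) * (2 * K * Real.sqrt B0) ≤ δ := by
    refine le_trans ?_ hB0δ
    rw [hX]
    exact mul_le_mul_of_nonneg_left (le_max_right _ _) (by rw [hX] at hXpos; exact hXpos.le)
  have hsqB0 : r ≤ Real.sqrt B0 := by
    rw [hrdef]; exact Real.sqrt_le_sqrt hBt0
  -- key inequality: μ' * s ≤ δ * (A_T * φ)
  have hδpos : 0 < δ := hδ.1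
  have key : μ' * s ≤ δ * (AT m ω l R K n * phi l d ξ) := by
    rcases le_or_gt ξ ((1+l)/(2*l)) with hcase | hcase
    · -- φ ≥ l ξ
      have hφge : l * ξ ≤ phi l d ξ := by
        rw [hφ]
        rw [le_sub_iff_add_le, ← sub_nonneg]
        have h1 : aL l / (ξ - bL l) ≤ 1 - l * ξ := by
          rw [div_le_iff₀ hξb]
          have hid : (1 - l * ξ) * (ξ - bL l) - aL l = (ξ - 1) * ((1 + l) / 2 - l * ξ) := by
            unfold aL bL
            field_simp
            ring
          have hc2 : l * ξ ≤ (1 + l) / 2 := by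
            rw [le_div_iff₀ (by positivity : (0:ℝ) < 2 * l)] at hcase
            linarith
          have h2 := mul_nonneg (sub_nonneg.mpr hξ1.le) (sub_nonneg.mpr hc2)
          linarith
        linarith
      have hφpos : 0 < phi l d ξ := lt_of_lt_of_le (by positivity) hφge
      calc μ' * s = μ' * (B t * ξ) := by
            rw [hξdef, mul_div_cancel₀ _ hBt.ne']
        _ ≤ μ' * (B0 * ξ) := by
            apply mul_le_mul_of_nonneg_left _ hμpos.le
            apply mul_le_mul_of_nonneg_right hBt0 (by linarith)
        _ = (μ' / AT m ω l R K n * (B0 / l)) * (AT m ω l R K n * (l * ξ)) := by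
            field_simp
        _ ≤ δ * (AT m ω l R K n * (l * ξ)) := by
            apply mul_le_mul_of_nonneg_right hδ1
            positivity
        _ ≤ δ * (AT m ω l R K n * phi l d ξ) := by
            apply mul_le_mul_of_nonneg_left _ hδpos.le
            exact mul_le_mul_of_nonneg_left hφge hATpos.le
    · -- ξ ≥ (1+l)/(2l) ≥ 2a + b, so φ ≥ 1/2
      have hξ2ab : 2 * aL l + bL l ≤ ξ := by
        have h1 : 2 * aL l + bL l ≤ (1+l)/(2*l) := by
          rw [le_div_iff₀ (by positivity : (0:ℝ) < 2 * l)]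
          have h2 := mul_nonneg hl0.le (sub_nonneg.mpr hl1)
          linarith [ha2, hb2, h2]
        linarith
      have hφge : (1:ℝ)/2 ≤ phi l d ξ := by
        rw [hφ]
        rw [le_sub_iff_add_le, ← sub_nonneg]
        have h1 : aL l / (ξ - bL l) ≤ 1/2 := by
          rw [div_le_iff₀ hξb]
          linarith
        linarith
      have hφpos : 0 < phi l d ξ := lt_of_lt_of_le (by norm_num) hφge
      calc μ' * s ≤ μ' * (K * r) := by
            apply mul_le_mul_of_nonneg_left hsK.le hμpos.le
        _ ≤ μ' * (K * Real.sqrt B0) := by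
            apply mul_le_mul_of_nonneg_left _ hμpos.le
            exact mul_le_mul_of_nonneg_left hsqB0 hK.le
        _ = (μ' / AT m ω l R K n * (2 * K * Real.sqrt B0)) * (AT m ω l R K n * (1/2)) := by
            field_simp
        _ ≤ δ * (AT m ω l R K n * (1/2)) := by
            apply mul_le_mul_of_nonneg_right hδ2
            positivity
        _ ≤ δ * (AT m ω l R K n * phi l d ξ) := by
            apply mul_le_mul_of_nonneg_left _ hδpos.le
            exact mul_le_mul_of_nonneg_left hφge hATpos.le
  -- φ ≥ 0
  have hφ0 : 0 ≤ phi l d ξ := by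
    by_contra h
    push_neg at h
    have h1 : AT m ω l R K n * phi l d ξ < 0 := mul_neg_of_pos_of_neg hATpos h
    have h2 : δ * (AT m ω l R K n * phi l d ξ) < 0 := mul_neg_of_pos_of_neg hδpos h1
    have h3 : 0 < μ' * s := mul_pos hμpos (lt_trans hBt hsB)
    linarith [key]
  have key2 : μ' * s ≤ δ * (Af m ω l R K n B t * phi l d ξ) := by
    refine le_trans key ?_
    apply mul_le_mul_of_nonneg_left _ hδpos.le
    exact mul_le_mul_of_nonneg_right hAge hφ0
  have hBξ : B t * ξ = s := by
    rw [hξdef, mul_div_cancel₀ _ hBt.ne']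
  rw [ge_iff_le]
  have hgoal : ((m * (n:ℝ)) / (ω * R ^ n)) / (n:ℝ) * B t * ξ = μ' * s := by
    rw [hμc, mul_assoc, hBξ]
  have he : (1 - δ) * (Af m ω l R K n B t * phi l d ξ)
      = Af m ω l R K n B t * phi l d ξ - δ * (Af m ω l R K n B t * phi l d ξ) := by
    ring
  linarith [key2]
end

section
/- Let n ∈ ℕ, m > 0, λ ∈ [1/3,1], K > 0 with K ≥ √(b_λ Rⁿ), T > 0, and let B ∈ C¹([0,T)) be positive and nonincreasing with B(t) ∈ (0,1), B(t) ≤ K²/(4(a_λ + b_λ)²), and K√(B(t)) < Rⁿ for all t ∈ [0,T). Set σ := (m/ω_n)·a_λ/(K² + a_λ Rⁿ). Then A(t)φ′(ξ)/B(t) ≥ σ, and consequently (A(t)φ′(ξ)/B(t))^{−k} ≤ σ^{−k} for every k ≥ 0, for all t ∈ (0,T) and all s ∈ (B(t), K√(B(t))), where ξ := s/B(t). -/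
open Real Set

set_option maxHeartbeats 1600000

/-- With `σ := (m/ω_n)·a_λ/(K² + a_λ Rⁿ)`, one has
`A(t)φ'(ξ)/B(t) ≥ σ` and hence `(A(t)φ'(ξ)/B(t))^{−k} ≤ σ^{−k}` for every `k ≥ 0`,
for `t ∈ (0,T)` and `s ∈ (B(t), K√B(t))`, `ξ = s/B(t)`. -/
theorem stmt16 (n : ℕ) (hn : 0 < n) (R m l K T d : ℝ) (hR : 0 < R) (hm : 0 < m)
    (hl : l ∈ Set.Icc (1/3 : ℝ) 1) (hK : 0 < K) (hKb : Real.sqrt (bL l * R ^ n) ≤ K)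
    (hT : 0 < T)
    (hd : d ∈ Set.Ioo (1 : ℝ) 2) (hde : (2 - d) * Real.exp d - 2 = 0)
    (B B' : ℝ → ℝ)
    (hB : ∀ t ∈ Set.Ico (0 : ℝ) T, HasDerivAt B (B' t) t)
    (hB'c : ContinuousOn B' (Set.Ico 0 T))
    (hBpos : ∀ t ∈ Set.Ico (0 : ℝ) T, B t ∈ Set.Ioo (0 : ℝ) 1)
    (hBanti : AntitoneOn B (Set.Ico 0 T))
    (hBle : ∀ t ∈ Set.Ico (0 : ℝ) T, B t ≤ K ^ 2 / (4 * (aL l + bL l) ^ 2))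
    (hBR : ∀ t ∈ Set.Ico (0 : ℝ) T, K * Real.sqrt (B t) < R ^ n) :
    ∀ t ∈ Set.Ioo (0 : ℝ) T, ∀ s ∈ Set.Ioo (B t) (K * Real.sqrt (B t)),
      (m / omegaN n) * aL l / (K ^ 2 + aL l * R ^ n)
          ≤ Af m (omegaN n) l R K n B t * phiD l d (s / B t) / B t ∧
      ∀ k : ℝ, 0 ≤ k →
        (Af m (omegaN n) l R K n B t * phiD l d (s / B t) / B t) ^ (-k)
          ≤ ((m / omegaN n) * aL l / (K ^ 2 + aL l * R ^ n)) ^ (-k) := by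
  -- basic facts about the parameters
  obtain ⟨hl1, hl2⟩ := hl
  have hlpos : 0 < l := lt_of_lt_of_le (by norm_num) hl1
  have haL : 0 ≤ aL l := div_nonneg (sq_nonneg _) (by linarith)
  have hbL0 : 0 ≤ bL l := div_nonneg (by linarith) (by linarith)
  have hbL1 : bL l ≤ 1 := by
    rw [bL, div_le_one (by linarith)]; linarith
  have habL : aL l + bL l = (l + 1) / 2 := by
    rw [aL, bL]; field_simp; ring
  have hRn : (0 : ℝ) < R ^ n := pow_pos hR n
  have hden : (0 : ℝ) < K ^ 2 + aL l * R ^ n := by positivity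
  have hωn : 0 < omegaN n := by
    rw [omegaN]
    apply mul_pos (by exact_mod_cast hn)
    apply ENNReal.toReal_pos
    · exact (Metric.measure_ball_pos _ _ one_pos).ne'
    · exact (MeasureTheory.measure_ball_lt_top).ne
  have hM : 0 < m / omegaN n := div_pos hm hωn
  intro t ht s hs
  have htI : t ∈ Set.Ico (0 : ℝ) T := ⟨ht.1.le, ht.2⟩
  have hbI := hBpos t htI
  set b := B t with hbdef
  have hb0 : 0 < b := hbI.1
  set q := Real.sqrt b with hqdef
  have hq0 : 0 < q := Real.sqrt_pos.2 hb0
  have hq2 : q ^ 2 = b := Real.sq_sqrt hb0.le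
  have hsbK : q ≤ K / (l + 1) := by
    have h1 : b ≤ K ^ 2 / (4 * (aL l + bL l) ^ 2) := hBle t htI
    have h2 : K ^ 2 / (4 * (aL l + bL l) ^ 2) = (K / (l + 1)) ^ 2 := by
      rw [habL]; field_simp; ring
    have h3 : q ≤ Real.sqrt ((K / (l + 1)) ^ 2) := by
      apply Real.sqrt_le_sqrt; rw [← h2]; exact h1
    rwa [Real.sqrt_sq (by positivity)] at h3
  have hqK : q ≤ K := le_trans hsbK (div_le_self hK.le (by linarith))
  have hbLqK : bL l * q ≤ K := le_trans (by nlinarith) hqK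
  set ξ := s / b with hxidef
  have hxi1 : 1 < ξ := (one_lt_div hb0).2 hs.1
  have hxib : 0 < ξ - bL l := by linarith
  have hxiq : ξ * q < K := by
    have : s < K * q := hs.2
    rw [hxidef, div_mul_eq_mul_div, div_lt_iff₀ hb0, ← hq2]
    nlinarith
  have hsqle : (ξ - bL l) ^ 2 * b ≤ (K - bL l * q) ^ 2 := by
    have h1 : (ξ - bL l) * q < K - bL l * q := by nlinarith
    have h2 : ((ξ - bL l) * q) ^ 2 ≤ (K - bL l * q) ^ 2 := by
      apply sq_le_sq' (by nlinarith [mul_pos hxib hq0]) h1.le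
    have h3 : ((ξ - bL l) * q) ^ 2 = (ξ - bL l) ^ 2 * b := by rw [mul_pow, hq2]
    linarith
  -- the quantity N
  have hC0 : 0 < aL l * R ^ n + (aL l + bL l) * (bL l * b) := by
    rcases hl2.lt_or_eq with h | h
    · have ha : 0 < aL l := by
        rw [aL]
        exact div_pos (pow_pos (by linarith) 2) (by linarith)
      have h2 : 0 ≤ (aL l + bL l) * (bL l * b) :=
        mul_nonneg (by linarith) (mul_nonneg hbL0 hb0.le)
      nlinarith [mul_pos ha hRn]
    · have hb1 : bL l = 1 := by rw [bL, h]; norm_num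
      have ha0 : aL l = 0 := by rw [aL, h]; norm_num
      rw [hb1, ha0]; linarith [hb0]
  have hC0' : 0 < aL l * R ^ n + (l + 1) / 2 * (bL l * b) := by rw [habL] at hC0; exact hC0
  have hNpos : 0 < Nf l R K n B t := by
    rw [Nf, ← hbdef, ← hqdef, habL]
    have h1 : (l + 1) * q ≤ K := by
      rw [le_div_iff₀ (by linarith)] at hsbK; linarith
    have h2 : K * ((l + 1) * q) ≤ K * K := mul_le_mul_of_nonneg_left h1 hK.le
    nlinarith
  have hNle : Nf l R K n B t ≤ K ^ 2 + aL l * R ^ n := by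
    rw [Nf, ← hbdef, ← hqdef]
    have h1 : 0 ≤ 2 * K * q - bL l * b := by nlinarith
    nlinarith
  -- rewrite phiD and Af
  have hphiD : phiD l d ξ = aL l / (ξ - bL l) ^ 2 := by
    rw [phiD, if_neg (not_lt.2 hxi1.le)]
  have hx : Af m (omegaN n) l R K n B t * phiD l d (s / b) / b
      = ((m / omegaN n) * aL l / Nf l R K n B t)
          * ((K - bL l * q) ^ 2 / ((ξ - bL l) ^ 2 * b)) := by
    rw [← hxidef, hphiD, Af, ← hbdef, ← hqdef]
    have hNe : Nf l R K n B t ≠ 0 := hNpos.ne'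
    have hωe : omegaN n ≠ 0 := hωn.ne'
    have hbe : b ≠ 0 := hb0.ne'
    have hxe : ξ - bL l ≠ 0 := hxib.ne'
    have hnum : K ^ 2 - 2 * bL l * K * q + bL l ^ 2 * b = (K - bL l * q) ^ 2 := by
      linear_combination (-(bL l) ^ 2) * hq2
    rw [hnum]
    field_simp
  have hCge : (1 : ℝ) ≤ (K - bL l * q) ^ 2 / ((ξ - bL l) ^ 2 * b) := by
    rw [le_div_iff₀ (by positivity)]; linarith
  have hσN : (m / omegaN n) * aL l / (K ^ 2 + aL l * R ^ n)
      ≤ (m / omegaN n) * aL l / Nf l R K n B t := by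
    gcongr
  have hmain : (m / omegaN n) * aL l / (K ^ 2 + aL l * R ^ n)
      ≤ Af m (omegaN n) l R K n B t * phiD l d (s / b) / b := by
    rw [hx]
    calc (m / omegaN n) * aL l / (K ^ 2 + aL l * R ^ n)
        ≤ (m / omegaN n) * aL l / Nf l R K n B t := hσN
      _ ≤ _ := le_mul_of_one_le_right (by positivity) hCge
  refine ⟨hmain, fun k hk => ?_⟩
  rcases (haL).lt_or_eq with ha | ha
  · have hσpos : 0 < (m / omegaN n) * aL l / (K ^ 2 + aL l * R ^ n) := by positivity
    exact Real.rpow_le_rpow_of_nonpos hσpos hmain (neg_nonpos.2 hk)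
  · have ha0 : aL l = 0 := ha.symm
    have hx0 : Af m (omegaN n) l R K n B t * phiD l d (s / b) / b = 0 := by
      rw [hx, ha0]; ring
    rw [hx0, ha0]
    simp
end

section
/- Let n ≥ 2, p, q ≥ 1 with p ≤ q, m > 0, and λ = 1/3 (so a_λ = 2/3 and b_λ = 0). Then for every χ > (mn/(ω_n Rⁿ))^{p−q} there exist K > 0, κ_n > 0, and B₀ₙ ∈ (0,1) with K√B₀ₙ < Rⁿ such that whenever T > 0 and B ∈ C¹([0,T)) is positive and nonincreasing with B(0) ≤ B₀ₙ and B′(t) ≥ −κ_n B(t)^{1−1/(2n)} for all t ∈ (0,T), one has (𝒫 w_in)(s,t) ≤ 0 for all t ∈ (0,T) and all s ∈ (B(t), K√(B(t))). -/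
open Real Set

section Aux
open Filter Topology

lemma aL_third : aL (1/3) = 2/3 := by norm_num [aL]
lemma bL_third : bL (1/3) = 0 := by norm_num [bL]

lemma omegaN_pos (n : ℕ) (hn : 1 ≤ n) : 0 < omegaN n := by
  have h1 : (0:ℝ) < (n:ℝ) := by exact_mod_cast Nat.pos_of_ne_zero (by omega)
  have h2 : 0 < MeasureTheory.volume (Metric.ball (0 : EuclideanSpace ℝ (Fin n)) 1) :=
    Metric.measure_ball_pos _ _ one_pos
  have h3 : MeasureTheory.volume (Metric.ball (0 : EuclideanSpace ℝ (Fin n)) 1) < ⊤ :=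
    MeasureTheory.measure_ball_lt_top
  exact mul_pos h1 (ENNReal.toReal_pos h2.ne' h3.ne)

lemma deriv_nonpos_of_antitoneOn {B : ℝ → ℝ} {b' t T : ℝ} (hT : t < T)
    (ht : 0 < t) (hB : HasDerivAt B b' t) (hanti : AntitoneOn B (Ico 0 T)) : b' ≤ 0 := by
  have hs := hasDerivAt_iff_tendsto_slope.1 hB
  have hs' : Tendsto (slope B t) (𝓝[>] t) (𝓝 b') :=
    hs.mono_left (nhdsWithin_mono t fun u hu => ne_of_gt hu)
  refine le_of_tendsto hs' ?_
  filter_upwards [Ioo_mem_nhdsGT_of_mem (by exact ⟨le_refl t, hT⟩)] with u hu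
  have hBu : B u ≤ B t := hanti ⟨ht.le, hT⟩ ⟨(ht.trans hu.1).le, hu.2⟩ hu.1.le
  have : 0 < u - t := by linarith [hu.1]
  simp only [slope_def_field]
  rw [div_nonpos_iff]
  right; constructor <;> linarith

lemma sqrt_one_add_sq_le {x : ℝ} (hx : 0 ≤ x) : Real.sqrt (1 + x^2) ≤ 1 + x := by
  rw [show (1:ℝ) + x = Real.sqrt ((1+x)^2) from (Real.sqrt_sq (by linarith)).symm]
  apply Real.sqrt_le_sqrt; nlinarith
set_option maxHeartbeats 1000000 in
lemma core_ineq (n : ℕ) (hn : 2 ≤ n) (p q χ : ℝ) (hp : 1 ≤ p) (hq : 1 ≤ q) (hpq : p ≤ q)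
    (c R K Amin ε W0 κ B0 : ℝ)
    (hc : 0 < c) (hR : 0 < R) (hK : 0 < K)
    (hAmin : 0 < Amin) (hε : 0 < ε) (hε2 : ε < 1/2) (hχ0 : 0 < χ)
    (hW0 : 0 < W0)
    (hσ0eq : W0 ^ (p - q) = (1 - 2*ε) * χ)
    (hκ : κ = ε*χ*(n:ℝ)^q*((2/3)*Amin)^q*K^(2-1/(n:ℝ)-2*q) / ((2/3)*(2*Amin)))
    (hB0e : c / R^n * (K*Real.sqrt B0) ≤ Amin/6)
    (hB0f : (1-ε)/ε ≤ (K*Real.sqrt B0)^(1/(n:ℝ)-1) * (Amin/6))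
    (A A' b b' s : ℝ)
    (hb : 0 < b) (hbB0 : b ≤ B0) (hbs : b < s) (hsK : s < K*Real.sqrt b)
    (hA_lb : Amin ≤ A) (hA_ub : A ≤ 2*Amin)
    (hW0ws : W0 ≤ (n:ℝ)*(2/3*Amin/K^2))
    (hA' : A' ≤ 0) (hb' : b' ≤ 0)
    (hb'k : -κ * b ^ (1-1/(2*(n:ℝ))) ≤ b') :
    A'*(1-2/3*b/s) - 2/3*A*b'/s
      - (n:ℝ)^(p+1) * (s^(2-2/(n:ℝ)) * (2/3*A*b/s^2)^p * (-(4/3)*A*b/s^3))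
          / Real.sqrt ((2/3*A*b/s^2)^2 + (n:ℝ)^2 * s^(2-2/(n:ℝ)) * (-(4/3)*A*b/s^3)^2)
      - (n:ℝ)^q * χ * ((A*(1-2/3*b/s) - c/R^n*s) * (2/3*A*b/s^2)^q)
          / Real.sqrt (1 + s^(2/(n:ℝ)-2) * (A*(1-2/3*b/s) - c/R^n*s)^2) ≤ 0 := by
  have hn2 : (2:ℝ) ≤ (n:ℝ) := by exact_mod_cast hn
  have hnpos : (0:ℝ) < (n:ℝ) := by linarith
  have hRn : (0:ℝ) < R ^ n := pow_pos hR n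
  have hspos : 0 < s := hb.trans hbs
  have hApos : 0 < A := lt_of_lt_of_le hAmin hA_lb
  have hsqb : 0 < Real.sqrt b := Real.sqrt_pos.2 hb
  have hsqB0 : Real.sqrt b ≤ Real.sqrt B0 := Real.sqrt_le_sqrt hbB0
  have hsKB0 : s ≤ K * Real.sqrt B0 := le_trans hsK.le (mul_le_mul_of_nonneg_left hsqB0 hK.le)
  have hrn : (0:ℝ) < 1/(n:ℝ) := by positivity
  have hrn2 : 1/(n:ℝ) ≤ 1/2 := by
    rw [div_le_div_iff₀ hnpos (by norm_num)]; linarith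
  -- exponents
  set e1 : ℝ := 1 - 1/(n:ℝ) with he1def
  have he1 : 0 < e1 := by rw [he1def]; linarith
  set e2 : ℝ := 2 - 1/(n:ℝ) - 2*q with he2def
  have he2neg : e2 < 0 := by rw [he2def]; linarith
  -- names
  set ws : ℝ := 2/3*A*b/s^2 with hwsdef
  have hws : 0 < ws := by positivity
  set SL : ℝ := s ^ e1 with hSLdef
  have hSL : 0 < SL := Real.rpow_pos_of_pos hspos _
  set φv : ℝ := 1 - 2/3*b/s with hφdef
  have hφ1 : 1/3 ≤ φv := by
    rw [hφdef]
    have hb1 : b/s ≤ 1 := by rw [div_le_one hspos]; linarith only [hbs]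
    have h23 : 2/3*b/s ≤ 2/3 := by rw [mul_div_assoc]; linarith only [hb1]
    linarith only [h23]
  have hφ2 : φv ≤ 1 := by
    rw [hφdef]
    have h0 : 0 ≤ 2/3*b/s := by positivity
    linarith only [h0]
  set y : ℝ := A*φv - c/R^n*s with hydef
  have hy_lb : Amin/6 ≤ y := by
    have h1 : c/R^n*s ≤ Amin/6 := by
      have : c/R^n*s ≤ c/R^n*(K*Real.sqrt B0) := by
        apply mul_le_mul_of_nonneg_left hsKB0 (by positivity)
      linarith
    have h2 : Amin*(1/3) ≤ A*φv := by
      apply mul_le_mul hA_lb hφ1 (by norm_num) hApos.le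
    rw [hydef]; linarith only [h1, h2]
  have hy : 0 < y := lt_of_lt_of_le (by positivity) hy_lb
  have hs2Kb : s^2 ≤ K^2*b := by
    have h1 : Real.sqrt b ^ 2 = b := Real.sq_sqrt hb.le
    have h2 : s^2 < (K*Real.sqrt b)^2 := pow_lt_pow_left₀ hsK hspos.le two_ne_zero
    have h3 : (K*Real.sqrt b)^2 = K^2*b := by rw [mul_pow, h1]
    linarith only [h2, h3]
  have hws_lb : 2/3*Amin/K^2 ≤ ws := by
    rw [hwsdef, div_le_div_iff₀ (by positivity) (by positivity)]
    have c1 : Amin*s^2 ≤ A*s^2 := mul_le_mul_of_nonneg_right hA_lb (sq_nonneg s)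
    have c2 : A*s^2 ≤ A*(K^2*b) := mul_le_mul_of_nonneg_left hs2Kb hApos.le
    linarith only [c1, c2]
  -- basic rpow identities
  have hs22 : s ^ (2 - 2/(n:ℝ)) = SL * SL := by
    rw [hSLdef, ← Real.rpow_add hspos]; congr 1; rw [he1def]; ring
  have hnp1 : (n:ℝ)^(p+1) = (n:ℝ)^p * (n:ℝ) := Real.rpow_add_one (ne_of_gt hnpos) p
  have hnp : (0:ℝ) < (n:ℝ)^p := Real.rpow_pos_of_pos hnpos _
  have hnq : (0:ℝ) < (n:ℝ)^q := Real.rpow_pos_of_pos hnpos _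
  -- ===================== h2 : diffusion bound =====================
  set D0 : ℝ := (n:ℝ) * SL * ((4/3)*A*b/s^3) with hD0def
  have hD0 : 0 < D0 := by rw [hD0def]; positivity
  have hS1 : D0 ≤ Real.sqrt (ws^2 + (n:ℝ)^2 * s^(2-2/(n:ℝ)) * (-(4/3)*A*b/s^3)^2) := by
    rw [show ws^2 + (n:ℝ)^2 * s^(2-2/(n:ℝ)) * (-(4/3)*A*b/s^3)^2 = ws^2 + D0^2 by
      rw [hD0def, hs22]; ring]
    rw [Real.le_sqrt hD0.le (by positivity)]
    linarith only [sq_nonneg ws]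
  have hterm2 : -((n:ℝ)^(p+1) * (s^(2-2/(n:ℝ)) * ws^p * (-(4/3)*A*b/s^3))
          / Real.sqrt (ws^2 + (n:ℝ)^2 * s^(2-2/(n:ℝ)) * (-(4/3)*A*b/s^3)^2))
        ≤ (n:ℝ)^p * SL * ws^p := by
    have hnum : -((n:ℝ)^(p+1) * (s^(2-2/(n:ℝ)) * ws^p * (-(4/3)*A*b/s^3)))
        = (n:ℝ)^p * SL * ws^p * D0 := by
      rw [hnp1, hs22, hD0def]; ring
    rw [← neg_div, hnum]
    calc (n:ℝ)^p * SL * ws^p * D0 / Real.sqrt (ws^2 + (n:ℝ)^2*s^(2-2/(n:ℝ))*(-(4/3)*A*b/s^3)^2)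
        ≤ (n:ℝ)^p * SL * ws^p * D0 / D0 := by
          apply div_le_div_of_nonneg_left (by positivity) hD0 hS1
      _ = (n:ℝ)^p * SL * ws^p := by field_simp
  -- C4
  have hnws : W0 ≤ (n:ℝ)*ws := by
    have h1 := mul_le_mul_of_nonneg_left hws_lb hnpos.le
    linarith only [h1, hW0ws]
  have hnwspos : (0:ℝ) < (n:ℝ)*ws := by positivity
  have hC4 : (n:ℝ)^p * SL * ws^p ≤ (1-2*ε)*χ*((n:ℝ)^q * SL * ws^q) := by
    have h1 : ((n:ℝ)*ws)^(p-q) ≤ (1-2*ε)*χ := by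
      rw [← hσ0eq]
      exact Real.rpow_le_rpow_of_nonpos hW0 hnws (by linarith)
    have h2 : (n:ℝ)^p * ws^p = ((n:ℝ)*ws)^(p-q) * ((n:ℝ)^q * ws^q) := by
      rw [← Real.mul_rpow hnpos.le hws.le, ← Real.mul_rpow hnpos.le hws.le,
        ← Real.rpow_add hnwspos]
      congr 1; ring
    have h3 : ((n:ℝ)*ws)^(p-q) * ((n:ℝ)^q * ws^q) ≤ ((1-2*ε)*χ) * ((n:ℝ)^q * ws^q) :=
      mul_le_mul_of_nonneg_right h1 (by positivity)
    calc (n:ℝ)^p * SL * ws^p = SL * ((n:ℝ)^p * ws^p) := by ring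
      _ = SL * (((n:ℝ)*ws)^(p-q) * ((n:ℝ)^q * ws^q)) := by rw [h2]
      _ ≤ SL * (((1-2*ε)*χ) * ((n:ℝ)^q * ws^q)) := by
          apply mul_le_mul_of_nonneg_left h3 hSL.le
      _ = (1-2*ε)*χ*((n:ℝ)^q * SL * ws^q) := by ring
  -- ===================== h3 : chemotaxis bound =====================
  set z : ℝ := s ^ (1/(n:ℝ) - 1) with hzdef
  have hz : 0 < z := Real.rpow_pos_of_pos hspos _
  have hz_lb : (K*Real.sqrt B0)^(1/(n:ℝ)-1) ≤ z := by
    rw [hzdef]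
    exact Real.rpow_le_rpow_of_nonpos hspos hsKB0 (by linarith)
  have hzSL : z * SL = 1 := by
    rw [hzdef, hSLdef, ← Real.rpow_add hspos,
      show 1/(n:ℝ)-1 + e1 = 0 by rw [he1def]; ring, Real.rpow_zero]
  have hzy : (1-ε)/ε ≤ z*y := by
    calc (1-ε)/ε ≤ (K*Real.sqrt B0)^(1/(n:ℝ)-1) * (Amin/6) := hB0f
      _ ≤ z*y := mul_le_mul hz_lb hy_lb (by positivity) hz.le
  have hs2n2 : s^(2/(n:ℝ)-2) = z^2 := by
    rw [hzdef, ← Real.rpow_natCast (s ^ (1/(n:ℝ)-1)) 2, ← Real.rpow_mul hspos.le]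
    congr 1; push_cast; ring
  have hsqS2 : Real.sqrt (1 + s^(2/(n:ℝ)-2)*y^2) ≤ (z*y)/(1-ε) := by
    rw [show 1 + s^(2/(n:ℝ)-2)*y^2 = 1 + (z*y)^2 by rw [hs2n2]; ring]
    refine le_trans (sqrt_one_add_sq_le (by positivity)) ?_
    rw [le_div_iff₀ (by linarith : (0:ℝ) < 1-ε)]
    have h1 : (1-ε) ≤ ε*(z*y) := by
      rw [div_le_iff₀ hε] at hzy; linarith only [hzy]
    linarith only [h1]
  have hterm3 : (1-ε)*χ*((n:ℝ)^q * SL * ws^q)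
      ≤ (n:ℝ)^q * χ * (y * ws^q) / Real.sqrt (1 + s^(2/(n:ℝ)-2)*y^2) := by
    have hden : 0 < Real.sqrt (1 + s^(2/(n:ℝ)-2)*y^2) := Real.sqrt_pos.2 (by positivity)
    rw [le_div_iff₀ hden]
    have hwsq : (0:ℝ) < ws^q := Real.rpow_pos_of_pos hws _
    have h1ε : (0:ℝ) < 1 - ε := by linarith only [hε2]
    have hcancel : (1-ε) * ((z*y)/(1-ε)) = z*y := by field_simp
    calc (1-ε)*χ*((n:ℝ)^q * SL * ws^q) * Real.sqrt (1 + s^(2/(n:ℝ)-2)*y^2)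
        ≤ (1-ε)*χ*((n:ℝ)^q * SL * ws^q) * ((z*y)/(1-ε)) := by
          apply mul_le_mul_of_nonneg_left hsqS2
          exact le_of_lt (by positivity)
      _ = χ*((n:ℝ)^q * SL * ws^q) * ((1-ε)*((z*y)/(1-ε))) := by ring
      _ = χ*((n:ℝ)^q * SL * ws^q) * (z*y) := by rw [hcancel]
      _ = (n:ℝ)^q * χ * (y * ws^q) * (z * SL) := by ring
      _ = (n:ℝ)^q * χ * (y * ws^q) := by rw [hzSL, mul_one]
  -- ===================== h1 : time-derivative bound =====================
  have hbe : (0:ℝ) < b ^ (1-1/(2*(n:ℝ))) := Real.rpow_pos_of_pos hb _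
  have hκpos : 0 < κ := by
    rw [hκ]
    have : (0:ℝ) < ((2/3)*Amin)^q := Real.rpow_pos_of_pos (by positivity) _
    have : (0:ℝ) < K^(2-1/(n:ℝ)-2*q) := Real.rpow_pos_of_pos hK _
    positivity
  have hC1 : A'*φv - 2/3*A*b'/s ≤ (2/3)*(2*Amin)*(κ*b^(1-1/(2*(n:ℝ))))/s := by
    have t1 : A'*φv ≤ 0 :=
      mul_nonpos_of_nonpos_of_nonneg hA' (le_trans (by norm_num : (0:ℝ) ≤ 1/3) hφ1)
    have t2 : -(2/3*A*b'/s) ≤ (2/3)*(2*Amin)*(κ*b^(1-1/(2*(n:ℝ))))/s := by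
      rw [← neg_div, div_le_div_iff₀ hspos hspos]
      have hnb' : -b' ≤ κ*b^(1-1/(2*(n:ℝ))) := by linarith only [hb'k]
      have h0b' : 0 ≤ -b' := by linarith only [hb']
      have hmm : A*(-b') ≤ (2*Amin)*(κ*b^(1-1/(2*(n:ℝ)))) :=
        mul_le_mul hA_ub hnb' h0b' (by linarith only [hAmin])
      have := mul_le_mul_of_nonneg_right hmm hspos.le
      linarith only [this]
    have h := add_le_add t1 t2
    rw [zero_add] at h
    rw [sub_eq_add_neg]
    exact h
  have hC5 : (2/3)*(2*Amin)*(κ*b^(1-1/(2*(n:ℝ))))/s ≤ ε*χ*((n:ℝ)^q * SL * ws^q) := by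
    set κ0 : ℝ := ε*χ*(n:ℝ)^q*((2/3)*Amin)^q with hκ0def
    have hAq : (0:ℝ) < ((2/3)*Amin)^q := Real.rpow_pos_of_pos (by positivity) _
    have hκ0 : 0 < κ0 := by rw [hκ0def]; positivity
    have hKe2 : (0:ℝ) < K^e2 := Real.rpow_pos_of_pos hK _
    -- (K√b)^e2 = K^e2 * b^(e2/2)
    have hKbeq : (K*Real.sqrt b)^e2 = K^e2 * b^(e2/2) := by
      rw [Real.mul_rpow hK.le (Real.sqrt_nonneg b), Real.sqrt_eq_rpow,
        ← Real.rpow_mul hb.le]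
      congr 2; ring
    have hKb : K^e2 * b^(e2/2) ≤ s^e2 := by
      rw [← hKbeq]
      exact Real.rpow_le_rpow_of_nonpos hspos hsK.le he2neg.le
    have hstar : K^e2 * b^(1-1/(2*(n:ℝ))) ≤ b^q * s^e2 := by
      have h2 : b^q * b^(e2/2) = b^(1-1/(2*(n:ℝ))) := by
        rw [← Real.rpow_add hb]; congr 1; rw [he2def]; ring
      calc K^e2 * b^(1-1/(2*(n:ℝ))) = b^q * (K^e2 * b^(e2/2)) := by rw [← h2]; ring
        _ ≤ b^q * s^e2 := by
            apply mul_le_mul_of_nonneg_left hKb (Real.rpow_nonneg hb.le q)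
    -- ws^q lower bound
    have hwsq_lb : ((2/3)*Amin)^q * b^q / s^(2*q) ≤ ws^q := by
      have h1 : (2/3*Amin*b/s^2) ≤ ws := by
        rw [hwsdef, div_le_div_iff₀ (by positivity) (by positivity)]
        have c1 : Amin*(b*s^2) ≤ A*(b*s^2) := mul_le_mul_of_nonneg_right hA_lb (by positivity)
        linarith only [c1]
      have h2 : ((2/3)*Amin*b/s^2)^q = ((2/3)*Amin)^q * b^q / s^(2*q) := by
        rw [Real.div_rpow (by positivity) (by positivity),
          Real.mul_rpow (by positivity) hb.le,
          ← Real.rpow_natCast s 2, ← Real.rpow_mul hspos.le]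
        norm_num
      calc ((2/3)*Amin)^q * b^q / s^(2*q) = ((2/3)*Amin*b/s^2)^q := h2.symm
        _ ≤ ws^q := Real.rpow_le_rpow (by positivity) h1 (by linarith)
    have hse2 : s^e2 = SL * s / s^(2*q) := by
      rw [hSLdef, eq_div_iff (ne_of_gt (Real.rpow_pos_of_pos hspos (2*q)))]
      rw [← Real.rpow_add hspos,
        show e2 + 2*q = e1 + 1 by rw [he1def, he2def]; ring,
        Real.rpow_add hspos, Real.rpow_one]
    have hL : (2/3)*(2*Amin)*(κ*b^(1-1/(2*(n:ℝ))))/s = κ0*(K^e2*b^(1-1/(2*(n:ℝ))))/s := by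
      rw [hκ, hκ0def, he2def]; field_simp
    have hs2q : (0:ℝ) < s^(2*q) := Real.rpow_pos_of_pos hspos _
    calc (2/3)*(2*Amin)*(κ*b^(1-1/(2*(n:ℝ))))/s = κ0*(K^e2*b^(1-1/(2*(n:ℝ))))/s := hL
      _ ≤ κ0*(b^q*s^e2)/s := by
          apply (div_le_div_iff_of_pos_right hspos).mpr
          exact mul_le_mul_of_nonneg_left hstar hκ0.le
      _ = ε*χ*((n:ℝ)^q * SL * (((2/3)*Amin)^q * b^q / s^(2*q))) := by
          rw [hκ0def, hse2]; field_simp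
      _ ≤ ε*χ*((n:ℝ)^q * SL * ws^q) := by
          apply mul_le_mul_of_nonneg_left ?_ (by positivity)
          exact mul_le_mul_of_nonneg_left hwsq_lb (by positivity)
  -- ===================== combine =====================
  have hterm1 : A'*φv - 2/3*A*b'/s ≤ ε*χ*((n:ℝ)^q * SL * ws^q) := le_trans hC1 hC5
  have k1 : A'*φv - 2/3*A*b'/s
      + -((n:ℝ)^(p+1) * (s^(2-2/(n:ℝ)) * ws^p * (-(4/3)*A*b/s^3))
          / Real.sqrt (ws^2 + (n:ℝ)^2 * s^(2-2/(n:ℝ)) * (-(4/3)*A*b/s^3)^2))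
      ≤ ε*χ*((n:ℝ)^q * SL * ws^q) + (1-2*ε)*χ*((n:ℝ)^q * SL * ws^q) :=
    add_le_add hterm1 (le_trans hterm2 hC4)
  have k2 := sub_le_sub k1 hterm3
  have k3 : ε*χ*((n:ℝ)^q * SL * ws^q) + (1-2*ε)*χ*((n:ℝ)^q * SL * ws^q)
      - (1-ε)*χ*((n:ℝ)^q * SL * ws^q) = 0 := by ring
  rw [k3] at k2
  calc A'*φv - 2/3*A*b'/s
      - (n:ℝ)^(p+1) * (s^(2-2/(n:ℝ)) * ws^p * (-(4/3)*A*b/s^3))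
          / Real.sqrt (ws^2 + (n:ℝ)^2 * s^(2-2/(n:ℝ)) * (-(4/3)*A*b/s^3)^2)
      - (n:ℝ)^q * χ * (y * ws^q) / Real.sqrt (1 + s^(2/(n:ℝ)-2)*y^2)
      = A'*φv - 2/3*A*b'/s
      + -((n:ℝ)^(p+1) * (s^(2-2/(n:ℝ)) * ws^p * (-(4/3)*A*b/s^3))
          / Real.sqrt (ws^2 + (n:ℝ)^2 * s^(2-2/(n:ℝ)) * (-(4/3)*A*b/s^3)^2))
      - (n:ℝ)^q * χ * (y * ws^q) / Real.sqrt (1 + s^(2/(n:ℝ)-2)*y^2) := by ring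
    _ ≤ 0 := k2
end Aux

section Main
set_option maxHeartbeats 1000000
open Filter Topology

/-- Intermediate region, `n ≥ 2`, `λ = 1/3`: for every
`χ > (mn/(ω_n Rⁿ))^{p−q}` there exist `K > 0`, `κ_n > 0` and `B₀ₙ ∈ (0,1)` with
`K√B₀ₙ < Rⁿ` such that every positive nonincreasing `B ∈ C¹([0,T))` with `B(0) ≤ B₀ₙ`
and `B' ≥ −κ_n B^{1−1/(2n)}` makes `(𝒫 w_in) ≤ 0` on the intermediate region. -/
theorem stmt18 (n : ℕ) (hn : 2 ≤ n) (R p q m χ : ℝ) (hR : 0 < R)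
    (hp : 1 ≤ p) (hq : 1 ≤ q) (hpq : p ≤ q) (hm : 0 < m)
    (hχ : ((m * n) / (omegaN n * R ^ n)) ^ (p - q) < χ)
    (d : ℝ) (hd : d ∈ Set.Ioo (1 : ℝ) 2) (hde : (2 - d) * Real.exp d - 2 = 0) :
    ∃ K : ℝ, 0 < K ∧ ∃ κ : ℝ, 0 < κ ∧ ∃ B0 ∈ Set.Ioo (0 : ℝ) 1,
      K * Real.sqrt B0 < R ^ n ∧
      ∀ T : ℝ, 0 < T → ∀ B B' : ℝ → ℝ,
        (∀ t ∈ Set.Ico (0 : ℝ) T, HasDerivAt B (B' t) t) →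
        ContinuousOn B' (Set.Ico 0 T) →
        (∀ t ∈ Set.Ico (0 : ℝ) T, 0 < B t) →
        AntitoneOn B (Set.Ico 0 T) →
        B 0 ≤ B0 →
        (∀ t ∈ Set.Ioo (0 : ℝ) T, B' t ≥ -κ * (B t) ^ (1 - 1 / (2 * (n : ℝ)))) →
        ∀ t ∈ Set.Ioo (0 : ℝ) T, ∀ s ∈ Set.Ioo (B t) (K * Real.sqrt (B t)),
          Pop n χ p q ((m * n) / (omegaN n * R ^ n))
            (fun σ τ => Af m (omegaN n) (1/3) R K n B τ * phi (1/3) d (σ / B τ)) s t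
            ≤ 0 := by
  have hω : 0 < omegaN n := omegaN_pos n (by omega)
  have hn0 : (n:ℝ) ≠ 0 := Nat.cast_ne_zero.2 (by omega)
  have hn2 : (2:ℝ) ≤ (n:ℝ) := by exact_mod_cast hn
  have hnpos : (0:ℝ) < (n:ℝ) := by linarith
  have hRn : (0:ℝ) < R ^ n := pow_pos hR n
  set ω : ℝ := omegaN n with hωdef
  set c : ℝ := m / ω with hcdef
  have hc : 0 < c := div_pos hm hω
  set μ : ℝ := m * (n:ℝ) / (ω * R ^ n) with hμdef
  have hμ : 0 < μ := div_pos (mul_pos hm hnpos) (mul_pos hω hRn)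
  set c0 : ℝ := 2/3 * R ^ n with hc0def
  have hc0 : 0 < c0 := by rw [hc0def]; positivity
  -- choose K
  obtain ⟨K, hK, hKχ⟩ : ∃ K : ℝ, 0 < K ∧ (μ * c0 / (K ^ 2 + c0)) ^ (p - q) < χ := by
    have hbase : ContinuousAt (fun K : ℝ => μ * c0 / (K ^ 2 + c0)) 0 := by
      apply ContinuousAt.div continuousAt_const (by fun_prop)
      norm_num
      positivity
    have hne : μ * c0 / ((0:ℝ) ^ 2 + c0) = μ := by
      rw [zero_pow (by norm_num), zero_add, mul_div_assoc, div_self hc0.ne', mul_one]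
    have hcont : ContinuousAt (fun K : ℝ => (μ * c0 / (K ^ 2 + c0)) ^ (p - q)) 0 := by
      apply ContinuousAt.rpow_const hbase
      left; rw [hne]; exact hμ.ne'
    have hval : (μ * c0 / ((0:ℝ) ^ 2 + c0)) ^ (p - q) < χ := by rw [hne]; exact hχ
    have hev : ∀ᶠ K in 𝓝 (0:ℝ), (μ * c0 / (K ^ 2 + c0)) ^ (p - q) < χ :=
      hcont.eventually_lt_const hval
    have hev' : ∀ᶠ K : ℝ in 𝓝[>] 0, (μ * c0 / (K ^ 2 + c0)) ^ (p - q) < χ :=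
      hev.filter_mono (nhdsWithin_le_nhds : 𝓝[Set.Ioi (0:ℝ)] 0 ≤ 𝓝 0)
    obtain ⟨K, hK1, hK2⟩ :=
      (hev'.and (self_mem_nhdsWithin : Set.Ioi (0:ℝ) ∈ 𝓝[Set.Ioi (0:ℝ)] 0)).exists
    exact ⟨K, hK2, hK1⟩
  set c1 : ℝ := K ^ 2 + c0 with hc1def
  have hc1 : 0 < c1 := by rw [hc1def]; positivity
  set Amin : ℝ := c * K ^ 2 / c1 with hAmindef
  have hAmin : 0 < Amin := by rw [hAmindef]; positivity
  set W0 : ℝ := μ * c0 / c1 with hW0def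
  have hW0 : 0 < W0 := by rw [hW0def]; positivity
  have hσ0 : 0 < W0 ^ (p - q) := Real.rpow_pos_of_pos hW0 _
  have hσ0χ : W0 ^ (p - q) < χ := hKχ
  have hχ0 : 0 < χ := hσ0.trans hσ0χ
  set ε : ℝ := (χ - W0 ^ (p - q)) / (2 * χ) with hεdef
  have hε : 0 < ε := by rw [hεdef]; exact div_pos (by linarith) (by linarith)
  have hε2 : ε < 1/2 := by
    rw [hεdef, div_lt_iff₀ (by linarith : (0:ℝ) < 2*χ)]
    linarith only [hσ0, hχ0]
  have hσ0eq : W0 ^ (p - q) = (1 - 2*ε) * χ := by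
    rw [hεdef]; field_simp; ring
  set κ : ℝ := ε*χ*(n:ℝ)^q*((2/3)*Amin)^q*K^(2-1/(n:ℝ)-2*q) / ((2/3)*(2*Amin)) with hκdef
  have hκpos : 0 < κ := by
    rw [hκdef]
    have h1 : (0:ℝ) < ((2/3)*Amin)^q := Real.rpow_pos_of_pos (by positivity) _
    have h2 : (0:ℝ) < K^(2-1/(n:ℝ)-2*q) := Real.rpow_pos_of_pos hK _
    have h3 : (0:ℝ) < (n:ℝ)^q := Real.rpow_pos_of_pos hnpos _
    positivity
  -- choose B0
  obtain ⟨B0, hB0a, hB0b, hB0c, hB0d, hB0e, hB0f⟩ :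
      ∃ B0 : ℝ, 0 < B0 ∧ B0 < 1 ∧ K * Real.sqrt B0 < R ^ n ∧
        4/3 * K * Real.sqrt B0 ≤ c1 / 2 ∧ c / R ^ n * (K * Real.sqrt B0) ≤ Amin / 6 ∧
        (1-ε)/ε ≤ (K * Real.sqrt B0) ^ (1/(n:ℝ) - 1) * (Amin / 6) := by
    have hsq0 : Tendsto (fun b : ℝ => K * Real.sqrt b) (𝓝[>] 0) (𝓝 0) := by
      have h : Tendsto (fun b : ℝ => K * Real.sqrt b) (𝓝 0) (𝓝 (K * Real.sqrt 0)) :=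
        ((continuous_const (y := K)).mul Real.continuous_sqrt).tendsto 0
      simp only [Real.sqrt_zero, mul_zero] at h
      exact h.mono_left nhdsWithin_le_nhds
    have hsq' : Tendsto (fun b : ℝ => K * Real.sqrt b) (𝓝[>] 0) (𝓝[>] 0) := by
      rw [tendsto_nhdsWithin_iff]
      refine ⟨hsq0, ?_⟩
      filter_upwards [self_mem_nhdsWithin] with b hb
      exact mul_pos hK (Real.sqrt_pos.2 hb)
    have hrp : Tendsto (fun x : ℝ => x ^ (1/(n:ℝ) - 1)) (𝓝[>] 0) atTop := by
      have he1 : (0:ℝ) < 1 - 1/(n:ℝ) := by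
        have h12 : 1/(n:ℝ) ≤ 1/2 := by
          rw [div_le_div_iff₀ hnpos (by norm_num)]; linarith
        linarith
      have h1 : Tendsto (fun x : ℝ => (x⁻¹) ^ (1 - 1/(n:ℝ))) (𝓝[>] 0) atTop :=
        (tendsto_rpow_atTop he1).comp tendsto_inv_nhdsGT_zero
      refine h1.congr' ?_
      filter_upwards [self_mem_nhdsWithin] with x hx
      rw [Real.inv_rpow (le_of_lt hx), ← Real.rpow_neg (le_of_lt hx)]
      congr 1; ring
    have hcomp : Tendsto (fun b : ℝ => (K * Real.sqrt b) ^ (1/(n:ℝ) - 1)) (𝓝[>] 0) atTop :=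
      hrp.comp hsq'
    have E2 : ∀ᶠ b in 𝓝[>] (0:ℝ), (1-ε)/ε ≤ (K * Real.sqrt b) ^ (1/(n:ℝ) - 1) * (Amin / 6) :=
      (hcomp.atTop_mul_const (by positivity : (0:ℝ) < Amin / 6)).eventually_ge_atTop _
    have E1a : ∀ᶠ b in 𝓝[>] (0:ℝ), K * Real.sqrt b < R ^ n := hsq0.eventually_lt_const hRn
    have E1b : ∀ᶠ b in 𝓝[>] (0:ℝ), 4/3 * K * Real.sqrt b < c1 / 2 := by
      have h : Tendsto (fun b : ℝ => 4/3 * (K * Real.sqrt b)) (𝓝[>] 0) (𝓝 0) := by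
        simpa using hsq0.const_mul (4/3 : ℝ)
      filter_upwards [h.eventually_lt_const (by positivity : (0:ℝ) < c1/2)] with b hb
      linarith [hb]
    have E1c : ∀ᶠ b in 𝓝[>] (0:ℝ), c / R ^ n * (K * Real.sqrt b) < Amin / 6 := by
      have h : Tendsto (fun b : ℝ => c / R ^ n * (K * Real.sqrt b)) (𝓝[>] 0) (𝓝 0) := by
        simpa using hsq0.const_mul (c / R ^ n)
      exact h.eventually_lt_const (by positivity)
    have E3 : ∀ᶠ b in 𝓝[>] (0:ℝ), b < 1 :=
      (tendsto_id.mono_right nhdsWithin_le_nhds).eventually_lt_const one_pos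
    obtain ⟨B0, ⟨⟨⟨⟨h1, h2⟩, h3⟩, h4⟩, h5⟩, h6⟩ :=
      (((((E1a.and E1b).and E1c).and E2).and E3).and self_mem_nhdsWithin).exists
    exact ⟨B0, h6, h5, h1, le_of_lt h2, le_of_lt h3, h4⟩
  refine ⟨K, hK, κ, hκpos, B0, ⟨hB0a, hB0b⟩, hB0c, ?_⟩
  intro T hT B B' hBd hB'c hBpos hBanti hB0le hB'ge t ht s hs
  -- setup at the point (s, t)
  have htI : t ∈ Set.Ico (0:ℝ) T := ⟨ht.1.le, ht.2⟩
  have hb : 0 < B t := hBpos t htI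
  have hbs : B t < s := hs.1
  have hsK : s < K * Real.sqrt (B t) := hs.2
  have hspos : 0 < s := hb.trans hbs
  have hbB0 : B t ≤ B0 := le_trans (hBanti ⟨le_refl 0, hT⟩ htI ht.1.le) hB0le
  have hBt : HasDerivAt B (B' t) t := hBd t htI
  have hb'0 : B' t ≤ 0 := deriv_nonpos_of_antitoneOn ht.2 ht.1 hBt hBanti
  have hsqb : 0 < Real.sqrt (B t) := Real.sqrt_pos.2 hb
  have hsqbB0 : Real.sqrt (B t) ≤ Real.sqrt B0 := Real.sqrt_le_sqrt hbB0
  -- N and A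
  set N : ℝ → ℝ := fun τ => c1 - 4/3 * K * Real.sqrt (B τ) with hNdef
  have hNf : ∀ τ, Af m ω (1/3) R K n B τ = c * K ^ 2 / N τ := by
    intro τ
    simp only [Af, Nf, aL_third, bL_third, hNdef, hc1def, hc0def, hcdef]
    norm_num
    ring_nf
  have hNt_lb : c1 / 2 ≤ N t := by
    have h1 : 4/3 * K * Real.sqrt (B t) ≤ 4/3 * K * Real.sqrt B0 := by
      apply mul_le_mul_of_nonneg_left hsqbB0 (by positivity)
    simp only [hNdef]
    linarith [hB0d]
  have hNt_ub : N t ≤ c1 := by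
    simp only [hNdef]
    have h0 : 0 ≤ 4/3 * K * Real.sqrt (B t) := by positivity
    linarith
  have hNt : 0 < N t := lt_of_lt_of_le (by linarith) hNt_lb
  have hA_lb : Amin ≤ c * K ^ 2 / N t := by
    rw [hAmindef]
    exact div_le_div_of_nonneg_left (by positivity) hNt hNt_ub
  have hA_ub : c * K ^ 2 / N t ≤ 2 * Amin := by
    have h1 : c * K ^ 2 / N t ≤ c * K ^ 2 / (c1 / 2) :=
      div_le_div_of_nonneg_left (by positivity) (by linarith) hNt_lb
    have h2 : c * K ^ 2 / (c1 / 2) = 2 * Amin := by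
      rw [hAmindef]; field_simp
    linarith
  have hW0ws : W0 ≤ (n:ℝ)*(2/3*Amin/K^2) := by
    apply le_of_eq
    rw [hW0def, hμdef, hAmindef, hc0def, hcdef]
    field_simp
  -- derivative of A
  have hsqB : HasDerivAt (fun τ => Real.sqrt (B τ)) (1 / (2 * Real.sqrt (B t)) * B' t) t :=
    (Real.hasDerivAt_sqrt hb.ne').comp t hBt
  have hNd : HasDerivAt N (-(4/3 * K * (1 / (2 * Real.sqrt (B t)) * B' t))) t := by
    have h := (hsqB.const_mul (4/3 * K)).const_sub c1
    simpa [hNdef] using h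
  have hAd : HasDerivAt (fun τ => c * K ^ 2 / N τ)
      (2/3 * c * K ^ 3 * B' t / (Real.sqrt (B t) * (N t) ^ 2)) t := by
    have h := (hasDerivAt_const t (c * K ^ 2)).div hNd hNt.ne'
    refine h.congr_deriv ?_
    field_simp
    ring
  have hA'le : 2/3 * c * K ^ 3 * B' t / (Real.sqrt (B t) * (N t) ^ 2) ≤ 0 := by
    apply div_nonpos_of_nonpos_of_nonneg
    · exact mul_nonpos_of_nonneg_of_nonpos (by positivity) hb'0
    · positivity
  -- phi on the outer branch
  have hphiO : ∀ ξ : ℝ, 1 < ξ → phi (1/3) d ξ = 1 - 2/3/ξ := by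
    intro ξ h1
    rw [phi, if_neg (not_lt.2 h1.le), aL_third, bL_third, sub_zero]
  have hphiB : ∀ x : ℝ, 0 < x → x < s → phi (1/3) d (s / x) = 1 - 2/3 * x / s := by
    intro x hx hxs
    rw [hphiO (s / x) ((one_lt_div hx).2 hxs), div_div_eq_mul_div]
  -- time derivative
  have hDt : HasDerivAt (fun τ => Af m ω (1/3) R K n B τ * phi (1/3) d (s / B τ))
      (2/3 * c * K ^ 3 * B' t / (Real.sqrt (B t) * (N t) ^ 2) * (1 - 2/3 * B t / s)
        - 2/3 * (c * K ^ 2 / N t) * B' t / s) t := by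
    have h1 : HasDerivAt (fun τ => (c * K ^ 2 / N τ) * (1 - 2/3 / s * B τ))
        (2/3 * c * K ^ 3 * B' t / (Real.sqrt (B t) * (N t) ^ 2) * (1 - 2/3 / s * B t)
          + (c * K ^ 2 / N t) * (-(2/3 / s * B' t))) t :=
      hAd.mul ((hBt.const_mul (2/3 / s)).const_sub 1)
    have hev : (fun τ => Af m ω (1/3) R K n B τ * phi (1/3) d (s / B τ))
        =ᶠ[𝓝 t] (fun τ => (c * K ^ 2 / N τ) * (1 - 2/3 / s * B τ)) := by
      have hmem : ∀ᶠ τ in 𝓝 t, B τ ∈ Set.Ioo (0:ℝ) s :=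
        hBt.continuousAt.preimage_mem_nhds (Ioo_mem_nhds hb hbs)
      filter_upwards [hmem] with τ hτ
      rw [hNf τ, hphiB (B τ) hτ.1 hτ.2]
      ring_nf
    have h2 := h1.congr_of_eventuallyEq hev
    refine h2.congr_deriv ?_
    ring
  -- space derivatives
  have hgσ : ∀ x : ℝ, x ≠ 0 → HasDerivAt (fun σ => (c * K ^ 2 / N t) * (1 - 2/3 * B t * σ⁻¹))
      (2/3 * (c * K ^ 2 / N t) * B t / x ^ 2) x := by
    intro x hx
    have h := (((hasDerivAt_inv hx).const_mul (2/3 * B t)).const_sub 1).const_mul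
      (c * K ^ 2 / N t)
    refine h.congr_deriv ?_
    field_simp
  have hev_s : (fun σ => Af m ω (1/3) R K n B t * phi (1/3) d (σ / B t))
      =ᶠ[𝓝 s] (fun σ => (c * K ^ 2 / N t) * (1 - 2/3 * B t * σ⁻¹)) := by
    filter_upwards [Ioi_mem_nhds hbs] with σ hσ
    have hσpos : 0 < σ := hb.trans hσ
    rw [hNf t, hphiO (σ / B t) ((one_lt_div hb).2 hσ), div_div_eq_mul_div,
      div_eq_mul_inv (2/3 * B t) σ]
  have hDs : deriv (fun σ => Af m ω (1/3) R K n B t * phi (1/3) d (σ / B t)) s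
      = 2/3 * (c * K ^ 2 / N t) * B t / s ^ 2 := by
    rw [hev_s.deriv_eq]
    exact (hgσ s hspos.ne').deriv
  have hDs_ev : (deriv fun σ => Af m ω (1/3) R K n B t * phi (1/3) d (σ / B t))
      =ᶠ[𝓝 s] (fun σ => 2/3 * (c * K ^ 2 / N t) * B t / σ ^ 2) := by
    refine hev_s.deriv.trans ?_
    filter_upwards [Ioi_mem_nhds hbs] with σ hσ
    exact (hgσ σ (hb.trans hσ).ne').deriv
  have hDss : deriv (deriv fun σ => Af m ω (1/3) R K n B t * phi (1/3) d (σ / B t)) s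
      = -(4/3) * (c * K ^ 2 / N t) * B t / s ^ 3 := by
    rw [hDs_ev.deriv_eq]
    have h := (hasDerivAt_const s (2/3 * (c * K ^ 2 / N t) * B t)).div
      (hasDerivAt_pow 2 s) (pow_ne_zero 2 hspos.ne')
    rw [show deriv (fun σ => 2/3 * (c * K ^ 2 / N t) * B t / σ ^ 2) s = _ from h.deriv]
    field_simp
    ring
  -- final rewriting and application of the core inequality
  have hμn : μ / (n:ℝ) = c / R ^ n := by
    rw [hμdef, hcdef]
    field_simp
  simp only [Pop]
  rw [hDt.deriv, hDs, hDss, hNf t, hphiB (B t) hb hbs, hμn]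
  exact core_ineq n hn p q χ hp hq hpq c R K Amin ε W0 κ B0 hc hR hK hAmin hε hε2 hχ0
    hW0 hσ0eq hκdef hB0e hB0f (c * K ^ 2 / N t)
    (2/3 * c * K ^ 3 * B' t / (Real.sqrt (B t) * (N t) ^ 2)) (B t) (B' t) s
    hb hbB0 hbs hsK hA_lb hA_ub hW0ws hA'le hb'0 (hB'ge t ht)
end Main
end
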